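/- arXiv:1712.09215 — 7 statements merged into one kernel-verified Lean document; each statement's English description precedes it below -/
import Mathlib

section
/- (Proposition 2.4, equivalence of the Lee–Pomeransky and Schwinger parametric representations.) Let ν ∈ ℝ^N and d ∈ ℝ with superficial degree of convergence ω := (Σ_{i=1}^N ν_i) − L·d/2 satisfying 0 < ω < d/2. Then Γ(d/2) · ∫_{(0,∞)^N} (∏_{i=1}^N x_i^{ν_i−1}) · (U(x)+F(x))^{−d/2} dx = Γ(d/2 − ω) · ∫_{(0,∞)^N} (∏_{i=1}^N x_i^{ν_i−1}) · U(x)^{−d/2} · exp(−F(x)/U(x)) dx, as an identity in [0,∞] (in particular, one side is finite exactly when the other is). -/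
open MeasureTheory Real Set
open scoped ENNReal

namespace LeePomProof


def S (N : ℕ) : Set (Fin N → ℝ) := {x | ∀ i, 0 < x i}

lemma isOpen_S {N : ℕ} : IsOpen (S N) := by
  have : S N = Set.pi Set.univ (fun _ : Fin N => Ioi (0:ℝ)) := by
    ext x; simp [S, Set.mem_pi]
  rw [this]; exact isOpen_set_pi Set.finite_univ (fun i _ => isOpen_Ioi)

lemma measurableSet_S {N : ℕ} : MeasurableSet (S N) := isOpen_S.measurableSet

lemma lint_gamma {s a : ℝ} (hs : 0 < s) (ha : 0 < a) :
    ∫⁻ u in Ioi (0:ℝ), ENNReal.ofReal (u ^ (s - 1) * Real.exp (-(a * u))) =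
      ENNReal.ofReal (Real.Gamma s * a ^ (-s)) := by
  have hint : IntegrableOn (fun u : ℝ => u ^ (s - 1) * Real.exp (-(a * u))) (Ioi 0) := by
    have h := integrableOn_rpow_mul_exp_neg_mul_rpow (p := 1) (s := s - 1) (b := a)
      (by linarith) one_pos ha
    simpa [Real.rpow_one, neg_mul] using h
  rw [← ofReal_integral_eq_lintegral_ofReal hint ?_]
  · rw [Real.integral_rpow_mul_exp_neg_mul_Ioi hs ha]
    congr 1
    rw [one_div, Real.inv_rpow ha.le, ← Real.rpow_neg ha.le, mul_comm]
  · filter_upwards [self_mem_ae_restrict measurableSet_Ioi] with u hu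
    have : (0:ℝ) < u := hu
    positivity

lemma lintegral_image_eq_lintegral_abs_deriv_mul {s : Set ℝ} {f f' : ℝ → ℝ}
    (hs : MeasurableSet s) (hff' : ∀ x ∈ s, HasDerivWithinAt f (f' x) s x)
    (hf : InjOn f s) (g : ℝ → ℝ≥0∞) :
    ∫⁻ x in f '' s, g x = ∫⁻ x in s, ENNReal.ofReal |f' x| * g (f x) := by
  simpa only [ContinuousLinearMap.det_toSpanSingleton] using
    lintegral_image_eq_lintegral_abs_det_fderiv_mul volume hs
      (fun x hx => (hff' x hx).hasFDerivWithinAt) hf g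


lemma lint_power {L : ℕ} (hL : 1 ≤ L) {w b : ℝ} (hw : 0 < w) (hb : 0 < b) :
    ∫⁻ u in Ioi (0:ℝ),
      ENNReal.ofReal (u ^ (-(w / (L:ℝ)) - 1) * Real.exp (-(b * u ^ (-1 / (L : ℝ))))) =
      ENNReal.ofReal ((L : ℝ) * (Real.Gamma w * b ^ (-w))) := by
  have hL0 : (L : ℝ) ≠ 0 := Nat.cast_ne_zero.mpr (by omega)
  have hLpos : (0:ℝ) < L := Nat.cast_pos.mpr (by omega)
  set g : ℝ → ℝ≥0∞ := fun u =>
    ENNReal.ofReal (u ^ (-(w / (L:ℝ)) - 1) * Real.exp (-(b * u ^ (-1 / (L : ℝ))))) with hg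
  set p : ℝ := -(L : ℝ) with hp
  have hp0 : p ≠ 0 := by simp [hp, hL0]
  have himg : (fun v : ℝ => v ^ p) '' (Ioi 0) = Ioi 0 := by
    ext t; constructor
    · rintro ⟨v, hv, rfl⟩; exact Real.rpow_pos_of_pos hv p
    · intro ht
      exact ⟨t ^ p⁻¹, Real.rpow_pos_of_pos ht _, Real.rpow_inv_rpow (le_of_lt ht) hp0⟩
  have hderiv : ∀ v ∈ Ioi (0:ℝ),
      HasDerivWithinAt (fun v : ℝ => v ^ p) (p * v ^ (p - 1)) (Ioi 0) v := fun v hv =>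
    (Real.hasDerivAt_rpow_const (Or.inl (ne_of_gt hv))).hasDerivWithinAt
  have hinj : InjOn (fun v : ℝ => v ^ p) (Ioi 0) := by
    intro x hx y hy hxy
    have h2 := congrArg (fun t : ℝ => t ^ p⁻¹) hxy
    simpa [Real.rpow_rpow_inv (le_of_lt hx) hp0, Real.rpow_rpow_inv (le_of_lt hy) hp0] using h2
  have key : ∀ v ∈ Ioi (0:ℝ), ENNReal.ofReal |p * v ^ (p - 1)| * g (v ^ p) =
      ENNReal.ofReal (L:ℝ) * ENNReal.ofReal (v ^ (w - 1) * Real.exp (-(b * v))) := by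
    intro v hv
    have hv0 : (0:ℝ) < v := hv
    have h1 : (v ^ p) ^ (-(w / (L:ℝ)) - 1) = v ^ (w + L) := by
      rw [← Real.rpow_mul hv0.le]
      congr 1
      rw [hp]; field_simp; ring
    have h2 : (v ^ p) ^ (-1 / (L:ℝ)) = v := by
      rw [← Real.rpow_mul hv0.le, show p * (-1 / (L:ℝ)) = 1 by rw [hp]; field_simp]
      exact Real.rpow_one v
    have h3 : |p * v ^ (p - 1)| = (L:ℝ) * v ^ (p - 1) := by
      rw [abs_mul, abs_of_pos (Real.rpow_pos_of_pos hv0 _), hp, abs_neg, Nat.abs_cast]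
    show ENNReal.ofReal |p * v ^ (p - 1)| * ENNReal.ofReal ((v ^ p) ^ (-(w / (L:ℝ)) - 1) * Real.exp (-(b * (v ^ p) ^ (-1 / (L : ℝ))))) = _
    rw [h1, h2, h3, ← ENNReal.ofReal_mul (by positivity), ← ENNReal.ofReal_mul (by positivity)]
    congr 1
    have h4 : v ^ (p - 1) * v ^ (w + L) = v ^ (w - 1) := by
      rw [← Real.rpow_add hv0]; congr 1; rw [hp]; ring
    calc (L:ℝ) * v ^ (p - 1) * (v ^ (w + (L:ℝ)) * Real.exp (-(b * v)))
        = (L:ℝ) * ((v ^ (p-1) * v ^ (w + (L:ℝ))) * Real.exp (-(b * v))) := by ring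
      _ = (L:ℝ) * (v ^ (w - 1) * Real.exp (-(b * v))) := by rw [h4]
  calc ∫⁻ u in Ioi (0:ℝ), g u
      = ∫⁻ u in (fun v : ℝ => v ^ p) '' Ioi 0, g u := by rw [himg]
    _ = ∫⁻ v in Ioi 0, ENNReal.ofReal |p * v ^ (p - 1)| * g (v ^ p) :=
        lintegral_image_eq_lintegral_abs_deriv_mul measurableSet_Ioi hderiv hinj g
    _ = ∫⁻ v in Ioi 0, ENNReal.ofReal (L:ℝ) *
          ENNReal.ofReal (v ^ (w - 1) * Real.exp (-(b * v))) :=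
        setLIntegral_congr_fun measurableSet_Ioi key
    _ = ENNReal.ofReal (L:ℝ) * ∫⁻ v in Ioi 0,
          ENNReal.ofReal (v ^ (w - 1) * Real.exp (-(b * v))) :=
        lintegral_const_mul' _ _ ENNReal.ofReal_ne_top
    _ = ENNReal.ofReal ((L : ℝ) * (Real.Gamma w * b ^ (-w))) := by
        rw [lint_gamma hw hb, ← ENNReal.ofReal_mul hLpos.le]


lemma lint_scale {N : ℕ} (f : (Fin N → ℝ) → ℝ≥0∞) {R : ℝ} (hR : 0 < R) :
    ∫⁻ x in S N, f x = ENNReal.ofReal (R ^ N) * ∫⁻ y in S N, f (R • y) := by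
  have hR0 : R ≠ 0 := ne_of_gt hR
  set e : (Fin N → ℝ) ≃ᵐ (Fin N → ℝ) :=
    (Homeomorph.smul (Units.mk0 R hR0)).toMeasurableEquiv with he
  have heapp : ∀ x, e x = R • x := fun x => rfl
  have hpre : e ⁻¹' (S N) = S N := by
    ext x
    simp only [Set.mem_preimage, heapp]
    constructor
    · intro h i
      have := h i
      have hx : (R • x) i = R * x i := rfl
      rw [hx] at this
      nlinarith [this, hR]
    · intro h i
      have hx : (R • x) i = R * x i := rfl
      rw [hx]; exact mul_pos hR (h i)
  have hfinrank : Module.finrank ℝ (Fin N → ℝ) = N := by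
    simp [Module.finrank_fintype_fun_eq_card]
  have hmap : Measure.map e (volume : Measure (Fin N → ℝ)) =
      ENNReal.ofReal ((R ^ N)⁻¹) • volume := by
    have : Measure.map (R • ·) (volume : Measure (Fin N → ℝ)) =
        ENNReal.ofReal |(R ^ Module.finrank ℝ (Fin N → ℝ))⁻¹| • volume :=
      Measure.map_addHaar_smul volume hR0
    rw [hfinrank, abs_of_pos (by positivity)] at this
    convert this using 2
    exact funext heapp
  have step : ∫⁻ y in S N, f (R • y) = ENNReal.ofReal ((R ^ N)⁻¹) * ∫⁻ x in S N, f x := by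
    calc ∫⁻ y in S N, f (R • y)
        = ∫⁻ y in e ⁻¹' (S N), f (e y) := by
          rw [hpre]; exact lintegral_congr fun y => by rw [heapp]
      _ = ∫⁻ z, f z ∂(Measure.map e (volume.restrict (e ⁻¹' (S N)))) :=
          (MeasureTheory.lintegral_map_equiv f e).symm
      _ = ∫⁻ z, f z ∂((Measure.map e volume).restrict (S N)) := by
          rw [Measure.restrict_map e.measurable measurableSet_S]
      _ = ∫⁻ z, f z ∂((ENNReal.ofReal ((R ^ N)⁻¹) • volume).restrict (S N)) := by rw [hmap]
      _ = ENNReal.ofReal ((R ^ N)⁻¹) * ∫⁻ x in S N, f x := by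
          rw [Measure.restrict_smul, lintegral_smul_measure, smul_eq_mul]
  rw [step, ← mul_assoc, ← ENNReal.ofReal_mul (by positivity),
    mul_inv_cancel₀ (by positivity), ENNReal.ofReal_one, one_mul]


lemma side {N L : ℕ} (hL : 1 ≤ L) {w α : ℝ} (hw : 0 < w) (hα : 0 < α)
    {Φ A Φ' Ψ : (Fin N → ℝ) → ℝ}
    (hΦc : ContinuousOn Φ (S N)) (hAc : ContinuousOn A (S N))
    (hΦ'c : ContinuousOn Φ' (S N)) (hΨc : ContinuousOn Ψ (S N))
    (hΦ0 : ∀ x ∈ S N, 0 ≤ Φ x) (hA0 : ∀ x ∈ S N, 0 < A x)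
    (hΦ'0 : ∀ x ∈ S N, 0 ≤ Φ' x) (hΨ0 : ∀ x ∈ S N, 0 < Ψ x)
    (hSopen : IsOpen (S N))
    (hscale : ∀ u ∈ Ioi (0:ℝ),
      ∫⁻ x in S N, ENNReal.ofReal (Φ x * Real.exp (-(A x * u))) =
        ENNReal.ofReal (u ^ (-(w / (L:ℝ)) - α)) *
          ∫⁻ y in S N, ENNReal.ofReal (Φ' y * Real.exp (-(Ψ y * u ^ (-1 / (L:ℝ)))))) :
    ENNReal.ofReal (Real.Gamma α) * ∫⁻ x in S N, ENNReal.ofReal (Φ x * A x ^ (-α)) =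
      ENNReal.ofReal ((L:ℝ) * Real.Gamma w) *
        ∫⁻ y in S N, ENNReal.ofReal (Φ' y * Ψ y ^ (-w)) := by
  set g : (Fin N → ℝ) → ℝ → ℝ≥0∞ := fun x u =>
    ENNReal.ofReal (Φ x * (u ^ (α - 1) * Real.exp (-(A x * u)))) with hgdef
  set h : ℝ → (Fin N → ℝ) → ℝ≥0∞ := fun u y =>
    ENNReal.ofReal (u ^ (-(w / (L:ℝ)) - 1) *
      (Φ' y * Real.exp (-(Ψ y * u ^ (-1 / (L:ℝ)))))) with hhdef
  -- step 1
  have e1 : ENNReal.ofReal (Real.Gamma α) * ∫⁻ x in S N, ENNReal.ofReal (Φ x * A x ^ (-α)) =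
      ∫⁻ x in S N, ∫⁻ u in Ioi (0:ℝ), g x u := by
    rw [← lintegral_const_mul' _ _ ENNReal.ofReal_ne_top]
    refine setLIntegral_congr_fun measurableSet_S (fun x hx => ?_)
    have hA := hA0 x hx
    have hΦ := hΦ0 x hx
    calc ENNReal.ofReal (Real.Gamma α) * ENNReal.ofReal (Φ x * A x ^ (-α))
        = ENNReal.ofReal (Φ x) * ENNReal.ofReal (Real.Gamma α * A x ^ (-α)) := by
          rw [← ENNReal.ofReal_mul (Real.Gamma_pos_of_pos hα).le,
            ← ENNReal.ofReal_mul hΦ]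
          congr 1; ring
      _ = ENNReal.ofReal (Φ x) *
            ∫⁻ u in Ioi (0:ℝ), ENNReal.ofReal (u ^ (α - 1) * Real.exp (-(A x * u))) := by
          rw [lint_gamma hα hA]
      _ = ∫⁻ u in Ioi (0:ℝ), g x u := by
          rw [← lintegral_const_mul' _ _ ENNReal.ofReal_ne_top]
          exact lintegral_congr fun u => by rw [hgdef, ← ENNReal.ofReal_mul hΦ]
  -- measurability for first swap
  have hgm : AEMeasurable (Function.uncurry g)
      ((volume.restrict (S N)).prod (volume.restrict (Ioi (0:ℝ)))) := by
    rw [Measure.prod_restrict]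
    refine (ENNReal.continuous_ofReal.comp_continuousOn ?_).aemeasurable
      (measurableSet_S.prod measurableSet_Ioi)
    refine ContinuousOn.mul (hΦc.comp continuous_fst.continuousOn fun p hp => hp.1)
      (ContinuousOn.mul ?_ ?_)
    · exact continuous_snd.continuousOn.rpow_const fun p hp => Or.inl (ne_of_gt hp.2)
    · exact Real.continuous_exp.comp_continuousOn
        (((hAc.comp continuous_fst.continuousOn fun p hp => hp.1).mul
          continuous_snd.continuousOn).neg)
  have e2 : ∫⁻ x in S N, ∫⁻ u in Ioi (0:ℝ), g x u =
      ∫⁻ u in Ioi (0:ℝ), ∫⁻ x in S N, g x u := lintegral_lintegral_swap hgm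
  -- step 3: fixed u
  have e3 : ∀ u ∈ Ioi (0:ℝ), ∫⁻ x in S N, g x u = ∫⁻ y in S N, h u y := by
    intro u hu
    have hu0 : (0:ℝ) < u := hu
    have step1 : ∫⁻ x in S N, g x u =
        ENNReal.ofReal (u ^ (α - 1)) *
          ∫⁻ x in S N, ENNReal.ofReal (Φ x * Real.exp (-(A x * u))) := by
      rw [← lintegral_const_mul' _ _ ENNReal.ofReal_ne_top]
      refine lintegral_congr fun x => ?_
      rw [hgdef, ← ENNReal.ofReal_mul (Real.rpow_nonneg hu0.le _)]
      congr 1; ring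
    rw [step1, hscale u hu, ← mul_assoc, ← ENNReal.ofReal_mul (Real.rpow_nonneg hu0.le _),
      ← Real.rpow_add hu0, show α - 1 + (-(w / (L:ℝ)) - α) = -(w / (L:ℝ)) - 1 by ring,
      ← lintegral_const_mul' _ _ ENNReal.ofReal_ne_top]
    exact lintegral_congr fun y => by
      rw [hhdef, ← ENNReal.ofReal_mul (Real.rpow_nonneg hu0.le _)]
  have e4 : ∫⁻ u in Ioi (0:ℝ), ∫⁻ x in S N, g x u =
      ∫⁻ u in Ioi (0:ℝ), ∫⁻ y in S N, h u y :=
    setLIntegral_congr_fun measurableSet_Ioi (fun u hu => e3 u hu)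
  -- measurability for second swap
  have hhm : AEMeasurable (Function.uncurry h)
      ((volume.restrict (Ioi (0:ℝ))).prod (volume.restrict (S N))) := by
    rw [Measure.prod_restrict]
    refine (ENNReal.continuous_ofReal.comp_continuousOn ?_).aemeasurable
      (measurableSet_Ioi.prod measurableSet_S)
    refine ContinuousOn.mul ?_ (ContinuousOn.mul
      (hΦ'c.comp continuous_snd.continuousOn fun p hp => hp.2) ?_)
    · exact continuous_fst.continuousOn.rpow_const fun p hp => Or.inl (ne_of_gt hp.1)
    · refine Real.continuous_exp.comp_continuousOn (ContinuousOn.neg ?_)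
      exact (hΨc.comp continuous_snd.continuousOn fun p hp => hp.2).mul
        (continuous_fst.continuousOn.rpow_const fun p hp => Or.inl (ne_of_gt hp.1))
  have e5 : ∫⁻ u in Ioi (0:ℝ), ∫⁻ y in S N, h u y =
      ∫⁻ y in S N, ∫⁻ u in Ioi (0:ℝ), h u y := lintegral_lintegral_swap hhm
  -- step 6 : fixed y
  have e6 : ∀ y ∈ S N, ∫⁻ u in Ioi (0:ℝ), h u y =
      ENNReal.ofReal ((L:ℝ) * Real.Gamma w) * ENNReal.ofReal (Φ' y * Ψ y ^ (-w)) := by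
    intro y hy
    have hΨy := hΨ0 y hy
    have hΦ'y := hΦ'0 y hy
    have step1 : ∫⁻ u in Ioi (0:ℝ), h u y =
        ENNReal.ofReal (Φ' y) * ∫⁻ u in Ioi (0:ℝ),
          ENNReal.ofReal (u ^ (-(w / (L:ℝ)) - 1) *
            Real.exp (-(Ψ y * u ^ (-1 / (L:ℝ))))) := by
      rw [← lintegral_const_mul' _ _ ENNReal.ofReal_ne_top]
      refine lintegral_congr fun u => ?_
      rw [hhdef, ← ENNReal.ofReal_mul hΦ'y]
      congr 1; ring
    rw [step1, lint_power hL hw hΨy, ← ENNReal.ofReal_mul hΦ'y,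
      ← ENNReal.ofReal_mul (by positivity)]
    congr 1; ring
  have e7 : ∫⁻ y in S N, ∫⁻ u in Ioi (0:ℝ), h u y =
      ENNReal.ofReal ((L:ℝ) * Real.Gamma w) *
        ∫⁻ y in S N, ENNReal.ofReal (Φ' y * Ψ y ^ (-w)) := by
    rw [← lintegral_const_mul' _ _ ENNReal.ofReal_ne_top]
    exact setLIntegral_congr_fun measurableSet_S (fun y hy => e6 y hy)
  rw [e1, e2, e4, e5, e7]


lemma smul_mem_S {N : ℕ} {c : ℝ} (hc : 0 < c) {y : Fin N → ℝ} (hy : y ∈ S N) :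
    c • y ∈ S N := by
  intro i
  have : (c • y) i = c * y i := rfl
  rw [this]
  exact mul_pos hc (hy i)

lemma prod_scale {N : ℕ} (ν : Fin N → ℝ) {c : ℝ} (hc : 0 < c) {y : Fin N → ℝ}
    (hy : y ∈ S N) :
    (∏ i, (c • y) i ^ (ν i - 1)) = c ^ (∑ i, (ν i - 1)) * ∏ i, y i ^ (ν i - 1) := by
  rw [Real.rpow_sum_of_pos hc, ← Finset.prod_mul_distrib]
  refine Finset.prod_congr rfl fun i _ => ?_
  have h : (c • y) i = c * y i := rfl
  rw [h, Real.mul_rpow hc.le (hy i).le]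

section scale
variable {N L : ℕ} (hL : 1 ≤ L) {U F : (Fin N → ℝ) → ℝ}

lemma cpow_facts {u : ℝ} (hu0 : 0 < u) (hL : 1 ≤ L) :
    (u ^ (-1 / (L:ℝ))) ^ (L:ℕ) * u = 1 ∧ (u ^ (-1 / (L:ℝ))) ^ (L+1) * u = u ^ (-1 / (L:ℝ)) := by
  have hL0 : (L:ℝ) ≠ 0 := Nat.cast_ne_zero.mpr (by omega)
  have hcL : (u ^ (-1 / (L:ℝ))) ^ (L:ℕ) = u ^ (-1:ℝ) := by
    rw [← Real.rpow_natCast (u ^ (-1 / (L:ℝ))) L, ← Real.rpow_mul hu0.le]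
    congr 1; field_simp
  have h1 : (u ^ (-1 / (L:ℝ))) ^ (L:ℕ) * u = 1 := by
    rw [hcL, Real.rpow_neg_one]; exact inv_mul_cancel₀ (ne_of_gt hu0)
  refine ⟨h1, ?_⟩
  rw [pow_succ, mul_comm ((u ^ (-1 / (L:ℝ))) ^ (L:ℕ)) (u ^ (-1 / (L:ℝ))), mul_assoc, h1, mul_one]

lemma const_combine {u : ℝ} (hu0 : 0 < u) (hL : 1 ≤ L) (ν : Fin N → ℝ) (e : ℝ)
    (he : -1 / (L:ℝ) * ((N:ℝ) + ((∑ i, ν i) - N)) = e) :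
    (u ^ (-1 / (L:ℝ))) ^ (N:ℕ) * (u ^ (-1 / (L:ℝ))) ^ (∑ i, (ν i - 1)) = u ^ e := by
  have hc0 : (0:ℝ) < u ^ (-1 / (L:ℝ)) := Real.rpow_pos_of_pos hu0 _
  have hsum : ∑ i, (ν i - 1 : ℝ) = (∑ i, ν i) - N := by
    rw [Finset.sum_sub_distrib, Finset.sum_const, Finset.card_univ, Fintype.card_fin]
    simp [nsmul_eq_mul]
  rw [← Real.rpow_natCast (u ^ (-1 / (L:ℝ))) N, ← Real.rpow_add hc0, ← Real.rpow_mul hu0.le,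
    hsum, he]
end scale

lemma hscaleLHS {N L : ℕ} (hL : 1 ≤ L) {U F : (Fin N → ℝ) → ℝ}
    (hUpos : ∀ x ∈ S N, 0 < U x) (hFpos : ∀ x ∈ S N, 0 < F x)
    (hUhom : ∀ t : ℝ, 0 < t → ∀ x ∈ S N, U (t • x) = t ^ L * U x)
    (hFhom : ∀ t : ℝ, 0 < t → ∀ x ∈ S N, F (t • x) = t ^ (L + 1) * F x)
    (ν : Fin N → ℝ) (d : ℝ) :
    ∀ u ∈ Ioi (0:ℝ),
      ∫⁻ x in S N, ENNReal.ofReal ((∏ i, x i ^ (ν i - 1)) * Real.exp (-((U x + F x) * u))) =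
        ENNReal.ofReal (u ^ (-((((∑ i, ν i) - (L:ℝ) * d / 2)) / (L:ℝ)) - d / 2)) *
          ∫⁻ y in S N, ENNReal.ofReal (((∏ i, y i ^ (ν i - 1)) * Real.exp (-(U y))) *
            Real.exp (-(F y * u ^ (-1 / (L:ℝ))))) := by
  intro u hu
  have hu0 : (0:ℝ) < u := hu
  set c : ℝ := u ^ (-1 / (L:ℝ)) with hc
  have hc0 : (0:ℝ) < c := Real.rpow_pos_of_pos hu0 _
  obtain ⟨hcLu, hcL1u⟩ := cpow_facts hu0 hL
  rw [lint_scale _ hc0]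
  have hpt : ∀ y ∈ S N,
      ENNReal.ofReal ((∏ i, (c • y) i ^ (ν i - 1)) *
          Real.exp (-((U (c • y) + F (c • y)) * u))) =
        ENNReal.ofReal (c ^ (∑ i, (ν i - 1))) *
          ENNReal.ofReal (((∏ i, y i ^ (ν i - 1)) * Real.exp (-(U y))) *
            Real.exp (-(F y * c))) := by
    intro y hy
    rw [hUhom c hc0 y hy, hFhom c hc0 y hy, prod_scale ν hc0 hy]
    have hexp : (c ^ L * U y + c ^ (L + 1) * F y) * u = U y + F y * c := by
      have h1 : (c ^ L * U y + c ^ (L + 1) * F y) * u =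
          (c ^ L * u) * U y + (c ^ (L + 1) * u) * F y := by ring
      rw [h1, hcLu, hcL1u, one_mul]; ring
    rw [hexp, show -(U y + F y * c) = -(U y) + -(F y * c) by ring, Real.exp_add,
      ← ENNReal.ofReal_mul (Real.rpow_nonneg hc0.le _)]
    congr 1; ring
  rw [setLIntegral_congr_fun measurableSet_S hpt,
    lintegral_const_mul' _ _ ENNReal.ofReal_ne_top, ← mul_assoc,
    ← ENNReal.ofReal_mul (pow_nonneg hc0.le N)]
  congr 2
  refine const_combine hu0 hL ν _ ?_
  have hL0 : (L:ℝ) ≠ 0 := Nat.cast_ne_zero.mpr (by omega)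
  field_simp
  ring

lemma hscaleRHS {N L : ℕ} (hL : 1 ≤ L) {U F : (Fin N → ℝ) → ℝ}
    (hUpos : ∀ x ∈ S N, 0 < U x) (hFpos : ∀ x ∈ S N, 0 < F x)
    (hUhom : ∀ t : ℝ, 0 < t → ∀ x ∈ S N, U (t • x) = t ^ L * U x)
    (hFhom : ∀ t : ℝ, 0 < t → ∀ x ∈ S N, F (t • x) = t ^ (L + 1) * F x)
    (ν : Fin N → ℝ) (d : ℝ) :
    ∀ u ∈ Ioi (0:ℝ),
      ∫⁻ x in S N, ENNReal.ofReal ((fun x => (∏ i, x i ^ (ν i - 1)) *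
            (U x ^ (-((∑ i, ν i) - (L:ℝ) * d / 2)) * Real.exp (-(F x / U x)))) x *
            Real.exp (-(U x * u))) =
        ENNReal.ofReal (u ^ (-((((∑ i, ν i) - (L:ℝ) * d / 2)) / (L:ℝ)) -
            (d / 2 - ((∑ i, ν i) - (L:ℝ) * d / 2)))) *
          ∫⁻ y in S N, ENNReal.ofReal ((fun y => (∏ i, y i ^ (ν i - 1)) *
            (U y ^ (-((∑ i, ν i) - (L:ℝ) * d / 2)) * Real.exp (-(U y)))) y *
            Real.exp (-((F y / U y) * u ^ (-1 / (L:ℝ))))) := by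
  intro u hu
  have hu0 : (0:ℝ) < u := hu
  set w : ℝ := (∑ i, ν i) - (L:ℝ) * d / 2 with hwdef
  set c : ℝ := u ^ (-1 / (L:ℝ)) with hc
  have hc0 : (0:ℝ) < c := Real.rpow_pos_of_pos hu0 _
  obtain ⟨hcLu, hcL1u⟩ := cpow_facts hu0 hL
  have hL0 : (L:ℝ) ≠ 0 := Nat.cast_ne_zero.mpr (by omega)
  have hcL : c ^ (L:ℕ) = u ^ (-1:ℝ) := by
    rw [hc, ← Real.rpow_natCast (u ^ (-1 / (L:ℝ))) L, ← Real.rpow_mul hu0.le]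
    congr 1; field_simp
  rw [lint_scale _ hc0]
  have hpt : ∀ y ∈ S N,
      ENNReal.ofReal ((∏ i, (c • y) i ^ (ν i - 1)) *
            (U (c • y) ^ (-w) * Real.exp (-(F (c • y) / U (c • y)))) *
            Real.exp (-(U (c • y) * u))) =
        ENNReal.ofReal (c ^ (∑ i, (ν i - 1)) * u ^ w) *
          ENNReal.ofReal ((∏ i, y i ^ (ν i - 1)) * (U y ^ (-w) * Real.exp (-(U y))) *
            Real.exp (-((F y / U y) * c))) := by
    intro y hy
    have hUy := hUpos y hy
    have hcLne : (c:ℝ) ^ (L:ℕ) ≠ 0 := by positivity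
    rw [hUhom c hc0 y hy, hFhom c hc0 y hy, prod_scale ν hc0 hy]
    have h1 : (c ^ L * U y) ^ (-w) = u ^ w * U y ^ (-w) := by
      rw [Real.mul_rpow (by positivity) hUy.le, hcL, ← Real.rpow_mul hu0.le]
      norm_num
    have h2 : c ^ (L + 1) * F y / (c ^ L * U y) = F y / U y * c := by
      rw [pow_succ]; field_simp
    have h3 : c ^ L * U y * u = U y := by
      rw [show c ^ L * U y * u = (c ^ L * u) * U y by ring, hcLu, one_mul]
    rw [h1, h2, h3, ← ENNReal.ofReal_mul (by positivity)]
    congr 1; ring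
  rw [setLIntegral_congr_fun measurableSet_S hpt,
    lintegral_const_mul' _ _ ENNReal.ofReal_ne_top, ← mul_assoc,
    ← ENNReal.ofReal_mul (pow_nonneg hc0.le N)]
  congr 2
  rw [← mul_assoc, const_combine hu0 hL ν (-(((∑ i, ν i)) / (L:ℝ))) (by field_simp; try ring),
    ← Real.rpow_add hu0]
  congr 1
  rw [hwdef]; field_simp; ring

lemma contW {N : ℕ} (ν : Fin N → ℝ) :
    ContinuousOn (fun x : Fin N → ℝ => ∏ i, x i ^ (ν i - 1)) (S N) := by
  refine continuousOn_finset_prod _ fun i _ => ?_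
  exact (continuous_apply i).continuousOn.rpow_const fun x hx => Or.inl (ne_of_gt (hx i))

lemma nonnegW {N : ℕ} (ν : Fin N → ℝ) {x : Fin N → ℝ} (hx : x ∈ S N) :
    0 ≤ ∏ i, x i ^ (ν i - 1) :=
  Finset.prod_nonneg fun i _ => Real.rpow_nonneg (hx i).le _

end LeePomProof

open LeePomProof Set in
/-- Proposition 2.4: equivalence of the Lee–Pomeransky and Schwinger parametric
representations, as an identity in `[0,∞]`. -/
theorem stmt_2 {N L : ℕ} (hN : 1 ≤ N) (hL : 1 ≤ L)
    (U F : (Fin N → ℝ) → ℝ)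
    (hUcont : ContinuousOn U {x : Fin N → ℝ | ∀ i, 0 < x i})
    (hFcont : ContinuousOn F {x : Fin N → ℝ | ∀ i, 0 < x i})
    (hUpos : ∀ x ∈ {x : Fin N → ℝ | ∀ i, 0 < x i}, 0 < U x)
    (hFpos : ∀ x ∈ {x : Fin N → ℝ | ∀ i, 0 < x i}, 0 < F x)
    (hUhom : ∀ t : ℝ, 0 < t → ∀ x ∈ {x : Fin N → ℝ | ∀ i, 0 < x i},
      U (t • x) = t ^ L * U x)
    (hFhom : ∀ t : ℝ, 0 < t → ∀ x ∈ {x : Fin N → ℝ | ∀ i, 0 < x i},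
      F (t • x) = t ^ (L + 1) * F x)
    (ν : Fin N → ℝ) (d : ℝ)
    (hω₁ : 0 < (∑ i, ν i) - (L : ℝ) * d / 2)
    (hω₂ : (∑ i, ν i) - (L : ℝ) * d / 2 < d / 2) :
    ENNReal.ofReal (Real.Gamma (d / 2)) *
        ∫⁻ x in {x : Fin N → ℝ | ∀ i, 0 < x i},
          ENNReal.ofReal ((∏ i, x i ^ (ν i - 1)) * (U x + F x) ^ (-(d / 2)))
      = ENNReal.ofReal (Real.Gamma (d / 2 - ((∑ i, ν i) - (L : ℝ) * d / 2))) *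
        ∫⁻ x in {x : Fin N → ℝ | ∀ i, 0 < x i},
          ENNReal.ofReal ((∏ i, x i ^ (ν i - 1)) * U x ^ (-(d / 2)) *
            Real.exp (-(F x / U x))) := by
  have hUc : ContinuousOn U (S N) := hUcont
  have hFc : ContinuousOn F (S N) := hFcont
  have hUp : ∀ x ∈ S N, 0 < U x := hUpos
  have hFp : ∀ x ∈ S N, 0 < F x := hFpos
  have hUh : ∀ t : ℝ, 0 < t → ∀ x ∈ S N, U (t • x) = t ^ L * U x := hUhom
  have hFh : ∀ t : ℝ, 0 < t → ∀ x ∈ S N, F (t • x) = t ^ (L + 1) * F x := hFhom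
  set ω : ℝ := (∑ i, ν i) - (L : ℝ) * d / 2 with hωdef
  have hd2 : 0 < d / 2 := lt_trans hω₁ hω₂
  have hα2 : 0 < d / 2 - ω := by linarith
  have hUne : ∀ x ∈ S N, U x ≠ 0 := fun x hx => (hUp x hx).ne'
  -- side 1
  have h1 := side (N := N) hL hω₁ hd2
    (Φ := fun x => ∏ i, x i ^ (ν i - 1)) (A := fun x => U x + F x)
    (Φ' := fun y => (∏ i, y i ^ (ν i - 1)) * Real.exp (-(U y))) (Ψ := F)
    (contW ν) (hUc.add hFc)
    ((contW ν).mul (Real.continuous_exp.comp_continuousOn hUc.neg)) hFc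
    (fun x hx => nonnegW ν hx)
    (fun x hx => add_pos (hUp x hx) (hFp x hx))
    (fun x hx => mul_nonneg (nonnegW ν hx) (Real.exp_pos _).le)
    hFp isOpen_S
    (hscaleLHS hL hUp hFp hUh hFh ν d)
  -- side 2
  have h2 := side (N := N) hL hω₁ hα2
    (Φ := fun x => (∏ i, x i ^ (ν i - 1)) * (U x ^ (-ω) * Real.exp (-(F x / U x))))
    (A := U)
    (Φ' := fun y => (∏ i, y i ^ (ν i - 1)) * (U y ^ (-ω) * Real.exp (-(U y))))
    (Ψ := fun y => F y / U y)
    ((contW ν).mul ((hUc.rpow_const fun x hx => Or.inl (hUne x hx)).mul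
      (Real.continuous_exp.comp_continuousOn (hFc.div hUc hUne).neg)))
    hUc
    ((contW ν).mul ((hUc.rpow_const fun x hx => Or.inl (hUne x hx)).mul
      (Real.continuous_exp.comp_continuousOn hUc.neg)))
    (hFc.div hUc hUne)
    (fun x hx => mul_nonneg (nonnegW ν hx)
      (mul_nonneg (Real.rpow_nonneg (hUp x hx).le _) (Real.exp_pos _).le))
    hUp
    (fun x hx => mul_nonneg (nonnegW ν hx)
      (mul_nonneg (Real.rpow_nonneg (hUp x hx).le _) (Real.exp_pos _).le))
    (fun x hx => div_pos (hFp x hx) (hUp x hx)) isOpen_S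
    (hscaleRHS hL hUp hFp hUh hFh ν d)
  -- bridges
  have bridge2 : ∫⁻ y in S N, ENNReal.ofReal
        (((∏ i, y i ^ (ν i - 1)) * Real.exp (-(U y))) * F y ^ (-ω)) =
      ∫⁻ y in S N, ENNReal.ofReal
        (((∏ i, y i ^ (ν i - 1)) * (U y ^ (-ω) * Real.exp (-(U y)))) * (F y / U y) ^ (-ω)) := by
    refine setLIntegral_congr_fun measurableSet_S (fun y hy => ?_)
    have hU := hUp y hy
    have hF := hFp y hy
    have hUne' : U y ^ (-ω) ≠ 0 := (Real.rpow_pos_of_pos hU _).ne'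
    congr 1
    rw [Real.div_rpow hF.le hU.le]
    field_simp
  have bridge1 : ∫⁻ x in S N, ENNReal.ofReal
        (((∏ i, x i ^ (ν i - 1)) * (U x ^ (-ω) * Real.exp (-(F x / U x)))) *
          U x ^ (-(d / 2 - ω))) =
      ∫⁻ x in S N, ENNReal.ofReal
        ((∏ i, x i ^ (ν i - 1)) * U x ^ (-(d / 2)) * Real.exp (-(F x / U x))) := by
    refine setLIntegral_congr_fun measurableSet_S (fun x hx => ?_)
    have hU := hUp x hx
    congr 1
    rw [show -(d / 2) = -ω + -(d / 2 - ω) by ring, Real.rpow_add hU]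
    ring
  calc ENNReal.ofReal (Real.Gamma (d / 2)) *
        ∫⁻ x in S N, ENNReal.ofReal ((∏ i, x i ^ (ν i - 1)) * (U x + F x) ^ (-(d / 2)))
      = ENNReal.ofReal ((L:ℝ) * Real.Gamma ω) *
          ∫⁻ y in S N, ENNReal.ofReal
            (((∏ i, y i ^ (ν i - 1)) * Real.exp (-(U y))) * F y ^ (-ω)) := h1
    _ = ENNReal.ofReal ((L:ℝ) * Real.Gamma ω) *
          ∫⁻ y in S N, ENNReal.ofReal
            (((∏ i, y i ^ (ν i - 1)) * (U y ^ (-ω) * Real.exp (-(U y)))) *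
              (F y / U y) ^ (-ω)) := by rw [bridge2]
    _ = ENNReal.ofReal (Real.Gamma (d / 2 - ω)) *
          ∫⁻ x in S N, ENNReal.ofReal
            (((∏ i, x i ^ (ν i - 1)) * (U x ^ (-ω) * Real.exp (-(F x / U x)))) *
              U x ^ (-(d / 2 - ω))) := h2.symm
    _ = ENNReal.ofReal (Real.Gamma (d / 2 - ω)) *
          ∫⁻ x in S N, ENNReal.ofReal
            ((∏ i, x i ^ (ν i - 1)) * U x ^ (-(d / 2)) * Real.exp (-(F x / U x))) := by
        rw [bridge1]
end

section
/- (Proposition 2.4, equivalence of the Schwinger and Feynman parametric representations, in the Cheng–Wu chart x_N = 1.) Assume N ≥ 2, let ν ∈ ℝ^N and d ∈ ℝ, and assume ω := (Σ_{i=1}^N ν_i) − L·d/2 > 0. Then ∫_{(0,∞)^N} (∏_{i=1}^N x_i^{ν_i−1}) · U(x)^{−d/2} · exp(−F(x)/U(x)) dx = Γ(ω) · ∫_{(0,∞)^{N−1}} (∏_{i=1}^{N−1} x_i^{ν_i−1}) · U(x_1,…,x_{N−1},1)^{ω−d/2} · F(x_1,…,x_{N−1},1)^{−ω} dx_1⋯dx_{N−1},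 as an identity in [0,∞]. -/
open MeasureTheory Set Real

lemma posOrthant_isOpen (k : ℕ) : IsOpen {z : Fin k → ℝ | ∀ i, 0 < z i} := by
  have : {z : Fin k → ℝ | ∀ i, 0 < z i} = ⋂ i, {z : Fin k → ℝ | 0 < z i} := by ext z; simp
  rw [this]
  exact isOpen_iInter_of_finite fun i => isOpen_lt continuous_const (continuous_apply i)

lemma gammaA {s r : ℝ} (hs : 0 < s) (hr : 0 < r) :
    ∫⁻ t in Set.Ioi (0:ℝ), ENNReal.ofReal (t ^ (s-1) * Real.exp (-(r * t)))
      = ENNReal.ofReal ((1/r) ^ s * Real.Gamma s) := by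
  rw [← Real.integral_rpow_mul_exp_neg_mul_Ioi hs hr]
  rw [ofReal_integral_eq_lintegral_ofReal]
  · have : IntegrableOn (fun x : ℝ => x ^ (s-1) * Real.exp (-r * x ^ (1:ℝ))) (Ioi 0) volume :=
      integrableOn_rpow_mul_exp_neg_mul_rpow (by linarith) zero_lt_one hr
    exact (by simpa [Real.rpow_one, neg_mul] using this :
      IntegrableOn (fun t : ℝ => t ^ (s-1) * Real.exp (-(r * t))) (Ioi 0) volume)
  · filter_upwards [self_mem_ae_restrict (measurableSet_Ioi : MeasurableSet (Ioi (0:ℝ)))] with t ht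
    have : (0:ℝ) < t := ht
    positivity

lemma scaleB {k : ℕ} {t : ℝ} (ht : 0 < t) (f : (Fin k → ℝ) → ENNReal) :
    ∫⁻ z in {z : Fin k → ℝ | ∀ i, 0 < z i}, f z
      = ENNReal.ofReal (t ^ k) * ∫⁻ w in {z : Fin k → ℝ | ∀ i, 0 < z i}, f (t • w) := by
  set T : Set (Fin k → ℝ) := {z | ∀ i, 0 < z i} with hT
  have hTm : MeasurableSet T := (posOrthant_isOpen k).measurableSet
  have hg : Measurable (fun x : Fin k → ℝ => t • x) := measurable_const_smul t
  have hemb : MeasurableEmbedding (fun x : Fin k → ℝ => t • x) :=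
    (MeasurableEquiv.smul₀ t ht.ne').measurableEmbedding
  have hpre : (fun x : Fin k → ℝ => t • x) ⁻¹' T = T := by
    ext w
    simp only [Set.mem_preimage, hT, Set.mem_setOf_eq, Pi.smul_apply, smul_eq_mul]
    exact forall_congr' fun i => mul_pos_iff_of_pos_left ht
  have key : ENNReal.ofReal (t ^ k) • Measure.map (fun x : Fin k → ℝ => t • x) volume = volume := by
    rw [Measure.map_addHaar_smul volume ht.ne', Module.finrank_fin_fun, smul_smul,
      abs_of_pos (by positivity), ← ENNReal.ofReal_mul (by positivity),
      mul_inv_cancel₀ (by positivity), ENNReal.ofReal_one, one_smul]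
  conv_lhs => rw [← key]
  rw [Measure.restrict_smul, lintegral_smul_measure, Measure.restrict_map hg hTm,
    hemb.lintegral_map, hpre, smul_eq_mul]

/-- Proposition 2.4: equivalence of the Schwinger and Feynman parametric
representations, in the Cheng–Wu chart `x_N = 1` (here `N = n + 1` with `n ≥ 1`),
as an identity in `[0,∞]`. -/
theorem stmt_3 {n L : ℕ} (hn : 1 ≤ n) (hL : 1 ≤ L)
    (U F : (Fin (n + 1) → ℝ) → ℝ)
    (hUcont : ContinuousOn U {x : Fin (n + 1) → ℝ | ∀ i, 0 < x i})
    (hFcont : ContinuousOn F {x : Fin (n + 1) → ℝ | ∀ i, 0 < x i})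
    (hUpos : ∀ x ∈ {x : Fin (n + 1) → ℝ | ∀ i, 0 < x i}, 0 < U x)
    (hFpos : ∀ x ∈ {x : Fin (n + 1) → ℝ | ∀ i, 0 < x i}, 0 < F x)
    (hUhom : ∀ t : ℝ, 0 < t → ∀ x ∈ {x : Fin (n + 1) → ℝ | ∀ i, 0 < x i},
      U (t • x) = t ^ L * U x)
    (hFhom : ∀ t : ℝ, 0 < t → ∀ x ∈ {x : Fin (n + 1) → ℝ | ∀ i, 0 < x i},
      F (t • x) = t ^ (L + 1) * F x)
    (ν : Fin (n + 1) → ℝ) (d : ℝ)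
    (hω : 0 < (∑ i, ν i) - (L : ℝ) * d / 2) :
    ∫⁻ x in {x : Fin (n + 1) → ℝ | ∀ i, 0 < x i},
        ENNReal.ofReal ((∏ i, x i ^ (ν i - 1)) * U x ^ (-(d / 2)) *
          Real.exp (-(F x / U x)))
      = ENNReal.ofReal (Real.Gamma ((∑ i, ν i) - (L : ℝ) * d / 2)) *
        ∫⁻ y in {y : Fin n → ℝ | ∀ i, 0 < y i},
          ENNReal.ofReal ((∏ i, y i ^ (ν i.castSucc - 1)) *
            U (Fin.snoc y 1) ^ (((∑ i, ν i) - (L : ℝ) * d / 2) - d / 2) *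
            F (Fin.snoc y 1) ^ (-((∑ i, ν i) - (L : ℝ) * d / 2))) := by
  set ω : ℝ := (∑ i, ν i) - (L : ℝ) * d / 2 with hωdef
  set S : Set (Fin (n+1) → ℝ) := {x | ∀ i, 0 < x i} with hSdef
  set T : Set (Fin n → ℝ) := {y | ∀ i, 0 < y i} with hTdef
  have hTm : MeasurableSet T := (posOrthant_isOpen n).measurableSet
  have hSmem : ∀ {x : Fin (n+1) → ℝ}, x ∈ S → ∀ i, 0 < x i := fun h => h
  have hTmem : ∀ {y : Fin n → ℝ}, y ∈ T → ∀ i, 0 < y i := fun h => h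
  -- membership of snoc
  have hsnocmem : ∀ {t : ℝ}, 0 < t → ∀ {y : Fin n → ℝ}, y ∈ T → (Fin.snoc y t : Fin (n+1) → ℝ) ∈ S := by
    intro t ht y hy i
    refine Fin.lastCases ?_ ?_ i
    · simpa using ht
    · intro j; simpa using hy j
  have hsnoc1 : ∀ {y : Fin n → ℝ}, y ∈ T → (Fin.snoc y 1 : Fin (n+1) → ℝ) ∈ S :=
    fun hy => hsnocmem one_pos hy
  have hsmulsnoc : ∀ (t : ℝ) (y : Fin n → ℝ),
      (Fin.snoc (t • y) t : Fin (n+1) → ℝ) = t • (Fin.snoc y 1 : Fin (n+1) → ℝ) := by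
    intro t y; funext i
    refine Fin.lastCases ?_ ?_ i
    · simp
    · intro j; simp
  -- continuity of the snoc maps
  have hsnocCont : Continuous (fun p : ℝ × (Fin n → ℝ) => (Fin.snoc p.2 p.1 : Fin (n+1) → ℝ)) := by
    apply continuous_pi; intro i
    refine Fin.lastCases ?_ ?_ i
    · simpa only [Fin.snoc_last] using (continuous_fst : Continuous fun p : ℝ × (Fin n → ℝ) => p.1)
    · intro j
      simpa only [Fin.snoc_castSucc, Function.comp_def] using ((continuous_apply j).comp
        (continuous_snd : Continuous fun p : ℝ × (Fin n → ℝ) => p.2))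
  have hsnoc1Cont : Continuous (fun y : Fin n → ℝ => (Fin.snoc y 1 : Fin (n+1) → ℝ)) :=
    hsnocCont.comp (continuous_const.prodMk continuous_id)
  -- the RHS-side auxiliary functions
  set U1 : (Fin n → ℝ) → ℝ := fun y => U (Fin.snoc y 1) with hU1def
  set F1 : (Fin n → ℝ) → ℝ := fun y => F (Fin.snoc y 1) with hF1def
  set P : (Fin n → ℝ) → ℝ := fun y => ∏ j, y j ^ (ν j.castSucc - 1) with hPdef
  set b : (Fin n → ℝ) → ℝ := fun y => F1 y / U1 y with hbdef
  set π0 : (Fin n → ℝ) → ℝ := fun y => P y * U1 y ^ (-(d/2)) with hπ0def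
  have hU1pos : ∀ y ∈ T, 0 < U1 y := fun y hy => hUpos _ (hsnoc1 hy)
  have hF1pos : ∀ y ∈ T, 0 < F1 y := fun y hy => hFpos _ (hsnoc1 hy)
  have hU1cont : ContinuousOn U1 T := hUcont.comp hsnoc1Cont.continuousOn fun y hy => hsnoc1 hy
  have hF1cont : ContinuousOn F1 T := hFcont.comp hsnoc1Cont.continuousOn fun y hy => hsnoc1 hy
  have hPcont : ContinuousOn P T := by
    apply continuousOn_finset_prod
    intro j _
    exact ((continuous_apply j).continuousOn).rpow_const fun y hy => Or.inl (hTmem hy j).ne'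
  have hPpos : ∀ y ∈ T, 0 < P y := fun y hy =>
    Finset.prod_pos fun j _ => Real.rpow_pos_of_pos (hTmem hy j) _
  have hπ0pos : ∀ y ∈ T, 0 < π0 y := fun y hy =>
    mul_pos (hPpos y hy) (Real.rpow_pos_of_pos (hU1pos y hy) _)
  have hπ0cont : ContinuousOn π0 T :=
    hPcont.mul (hU1cont.rpow_const fun y hy => Or.inl (hU1pos y hy).ne')
  have hbcont : ContinuousOn b T := hF1cont.div hU1cont fun y hy => (hU1pos y hy).ne'
  have hbpos : ∀ y ∈ T, 0 < b y := fun y hy => div_pos (hF1pos y hy) (hU1pos y hy)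
  -- the LHS integrand and its continuity
  have hGcont : ContinuousOn
      (fun x : Fin (n+1) → ℝ => (∏ i, x i ^ (ν i - 1)) * U x ^ (-(d / 2)) *
        Real.exp (-(F x / U x))) S := by
    have h1 : ContinuousOn (fun x : Fin (n+1) → ℝ => ∏ i, x i ^ (ν i - 1)) S := by
      apply continuousOn_finset_prod
      intro i _
      exact ((continuous_apply i).continuousOn).rpow_const fun x hx => Or.inl (hSmem hx i).ne'
    exact (h1.mul (hUcont.rpow_const fun x hx => Or.inl (hUpos x hx).ne')).mul
      (Real.continuous_exp.comp_continuousOn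
        ((hFcont.div hUcont fun x hx => (hUpos x hx).ne').neg))
  set ψ : ℝ → (Fin n → ℝ) → ENNReal :=
    fun t y => ENNReal.ofReal (t ^ (ω - 1) * (π0 y * Real.exp (-(t * b y)))) with hψdef
  -- the key pointwise identity
  have hGval : ∀ t : ℝ, 0 < t → ∀ y ∈ T,
      (t : ℝ) ^ (n : ℕ) * ((∏ i, (Fin.snoc (t • y) t : Fin (n+1) → ℝ) i ^ (ν i - 1)) *
          U (Fin.snoc (t • y) t) ^ (-(d / 2)) *
          Real.exp (-(F (Fin.snoc (t • y) t) / U (Fin.snoc (t • y) t))))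
        = t ^ (ω - 1) * (π0 y * Real.exp (-(t * b y))) := by
    intro t ht y hy
    have hx1 : (Fin.snoc y 1 : Fin (n+1) → ℝ) ∈ S := hsnoc1 hy
    rw [hsmulsnoc t y]
    have hU := hUhom t ht _ hx1
    have hF := hFhom t ht _ hx1
    rw [hU, hF]
    have hu : 0 < U (Fin.snoc y 1) := hUpos _ hx1
    have hf : 0 < F (Fin.snoc y 1) := hFpos _ hx1
    have hexp : t ^ (L+1) * F (Fin.snoc y 1) / (t ^ L * U (Fin.snoc y 1))
        = t * (F (Fin.snoc y 1) / U (Fin.snoc y 1)) := by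
      rw [pow_succ]
      field_simp
    have hprod : (∏ i, (t • (Fin.snoc y 1 : Fin (n+1) → ℝ)) i ^ (ν i - 1))
        = t ^ ((∑ i, ν i) - (n+1 : ℝ)) * P y := by
      have hterm : ∀ i : Fin (n+1), (t • (Fin.snoc y 1 : Fin (n+1) → ℝ)) i ^ (ν i - 1)
          = t ^ (ν i - 1) * (Fin.snoc y 1 : Fin (n+1) → ℝ) i ^ (ν i - 1) := by
        intro i
        rw [Pi.smul_apply, smul_eq_mul, Real.mul_rpow ht.le (hSmem hx1 i).le]
      rw [Finset.prod_congr rfl fun i _ => hterm i, Finset.prod_mul_distrib,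
        ← Real.rpow_sum_of_pos ht]
      congr 1
      · congr 1
        rw [Finset.sum_sub_distrib, Finset.sum_const, Finset.card_univ, Fintype.card_fin]
        push_cast; ring
      · rw [Fin.prod_univ_castSucc]
        simp [hPdef]
    have hUrw : (t ^ L * U (Fin.snoc y 1)) ^ (-(d / 2))
        = t ^ ((L : ℝ) * (-(d / 2))) * U (Fin.snoc y 1) ^ (-(d / 2)) := by
      rw [Real.mul_rpow (by positivity) hu.le, Real.rpow_natCast_mul ht.le]
    rw [hexp, hprod, hUrw]
    have hc : (t : ℝ) ^ (n : ℕ) * (t ^ ((∑ i, ν i) - (n+1 : ℝ)) * t ^ ((L : ℝ) * (-(d / 2))))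
        = t ^ (ω - 1) := by
      rw [← Real.rpow_natCast t n, ← Real.rpow_add ht, ← Real.rpow_add ht]
      congr 1
      rw [hωdef]; push_cast; ring
    simp only [hπ0def, hbdef, hU1def, hF1def]
    linear_combination (P y * U (Fin.snoc y 1) ^ (-(d / 2)) *
      Real.exp (-(t * (F (Fin.snoc y 1) / U (Fin.snoc y 1))))) * hc
  -- Step 1: unfold the last coordinate via the measure-preserving equivalence
  have hesymm : ∀ p : ℝ × (Fin n → ℝ),
      (MeasurableEquiv.piFinSuccAbove (fun _ : Fin (n+1) => ℝ) (Fin.last n)).symm p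
        = Fin.snoc p.2 p.1 := by
    intro p; funext i
    simp [MeasurableEquiv.piFinSuccAbove, Fin.insertNth_last', Fin.snocEquiv]
  have hpreS : (fun p : ℝ × (Fin n → ℝ) => (Fin.snoc p.2 p.1 : Fin (n+1) → ℝ)) ⁻¹' S
      = Ioi 0 ×ˢ T := by
    ext p
    simp only [Set.mem_preimage, Set.mem_prod, Set.mem_Ioi, hSdef, hTdef, Set.mem_setOf_eq]
    constructor
    · intro h
      refine ⟨?_, fun j => ?_⟩
      · simpa using h (Fin.last n)
      · simpa using h j.castSucc
    · rintro ⟨h1, h2⟩ i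
      refine Fin.lastCases ?_ ?_ i
      · simpa using h1
      · intro j; simpa using h2 j
  set g : ℝ × (Fin n → ℝ) → ENNReal := fun p => ENNReal.ofReal
    ((∏ i, (Fin.snoc p.2 p.1 : Fin (n+1) → ℝ) i ^ (ν i - 1)) *
      U (Fin.snoc p.2 p.1) ^ (-(d / 2)) *
      Real.exp (-(F (Fin.snoc p.2 p.1) / U (Fin.snoc p.2 p.1)))) with hgdef
  have step1 : (∫⁻ x in S, ENNReal.ofReal ((∏ i, x i ^ (ν i - 1)) * U x ^ (-(d / 2)) *
        Real.exp (-(F x / U x))))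
      = ∫⁻ p in Ioi 0 ×ˢ T, g p := by
    have hmp := (volume_preserving_piFinSuccAbove (fun _ : Fin (n+1) => ℝ) (Fin.last n)).symm
      (MeasurableEquiv.piFinSuccAbove (fun _ : Fin (n+1) => ℝ) (Fin.last n))
    have hkey := hmp.setLIntegral_comp_preimage_emb
      (MeasurableEquiv.measurableEmbedding _)
      (fun x : Fin (n+1) → ℝ => ENNReal.ofReal ((∏ i, x i ^ (ν i - 1)) * U x ^ (-(d / 2)) *
        Real.exp (-(F x / U x)))) S
    rw [← hkey]
    have hfun : ⇑(MeasurableEquiv.piFinSuccAbove (fun _ : Fin (n+1) => ℝ) (Fin.last n)).symm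
        = fun p : ℝ × (Fin n → ℝ) => (Fin.snoc p.2 p.1 : Fin (n+1) → ℝ) := funext hesymm
    rw [hfun, hpreS]
  have hmapsTo : ∀ p : ℝ × (Fin n → ℝ), p ∈ Ioi 0 ×ˢ T →
      (Fin.snoc p.2 p.1 : Fin (n+1) → ℝ) ∈ S := fun p hp => by
    rw [← hpreS] at hp; exact hp
  have hgcont : ContinuousOn g (Ioi 0 ×ˢ T) :=
    ENNReal.continuous_ofReal.comp_continuousOn
      (hGcont.comp hsnocCont.continuousOn hmapsTo)
  have step2 : ∫⁻ p in Ioi 0 ×ˢ T, g p = ∫⁻ t in Ioi 0, ∫⁻ y in T, g (t, y) := by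
    rw [Measure.volume_eq_prod, ← Measure.prod_restrict]
    exact lintegral_prod g (by
      rw [Measure.prod_restrict]
      exact hgcont.aemeasurable (measurableSet_Ioi.prod hTm))
  have step3 : ∫⁻ t in Ioi 0, ∫⁻ y in T, g (t, y) = ∫⁻ t in Ioi 0, ∫⁻ y in T, ψ t y := by
    refine setLIntegral_congr_fun measurableSet_Ioi (fun t ht => ?_)
    have hscale := scaleB ht (fun z => g (t, z))
    rw [show (∫⁻ y in T, g (t, y)) = ∫⁻ z in {z : Fin n → ℝ | ∀ i, 0 < z i}, g (t, z) from rfl,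
      hscale, ← lintegral_const_mul' _ _ ENNReal.ofReal_ne_top]
    refine setLIntegral_congr_fun hTm (fun w hw => ?_)
    show ENNReal.ofReal (t ^ n) * g (t, t • w) = ψ t w
    rw [hgdef, hψdef]
    simp only
    rw [← ENNReal.ofReal_mul (pow_nonneg (le_of_lt (mem_Ioi.mp ht)) n)]
    exact congrArg ENNReal.ofReal (hGval t ht w hw)
  have hψcont : ContinuousOn (Function.uncurry ψ) (Ioi 0 ×ˢ T) := by
    simp only [hψdef, Function.uncurry]
    apply ENNReal.continuous_ofReal.comp_continuousOn
    refine ContinuousOn.mul ?_ (ContinuousOn.mul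
      (hπ0cont.comp continuous_snd.continuousOn fun p hp => hp.2) ?_)
    · exact (continuous_fst.continuousOn).rpow_const fun p hp => Or.inl (ne_of_gt hp.1)
    · exact Real.continuous_exp.comp_continuousOn
        ((continuous_fst.continuousOn.mul
          (hbcont.comp continuous_snd.continuousOn fun p hp => hp.2)).neg)
  have step4 : ∫⁻ t in Ioi 0, ∫⁻ y in T, ψ t y = ∫⁻ y in T, ∫⁻ t in Ioi 0, ψ t y :=
    lintegral_lintegral_swap (by
      rw [Measure.prod_restrict]
      exact hψcont.aemeasurable (measurableSet_Ioi.prod hTm))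
  have step5 : ∫⁻ y in T, ∫⁻ t in Ioi 0, ψ t y
      = ∫⁻ y in T, ENNReal.ofReal (Real.Gamma ω) *
          ENNReal.ofReal (P y * U1 y ^ (ω - d / 2) * F1 y ^ (-ω)) := by
    refine setLIntegral_congr_fun hTm (fun w hw => ?_)
    have hb := hbpos w hw
    have hπ := hπ0pos w hw
    have hU1 := hU1pos w hw
    have hF1 := hF1pos w hw
    calc ∫⁻ t in Ioi 0, ψ t w
        = ∫⁻ t in Ioi 0, ENNReal.ofReal (π0 w) *
            ENNReal.ofReal (t ^ (ω - 1) * Real.exp (-(b w * t))) := by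
          refine setLIntegral_congr_fun measurableSet_Ioi (fun t ht => ?_)
          rw [hψdef]
          simp only
          rw [← ENNReal.ofReal_mul hπ.le]
          congr 1
          rw [show -(b w * t) = -(t * b w) by ring]
          ring
      _ = ENNReal.ofReal (π0 w) * ENNReal.ofReal ((1 / b w) ^ ω * Real.Gamma ω) := by
          rw [lintegral_const_mul' _ _ ENNReal.ofReal_ne_top, gammaA hω hb]
      _ = ENNReal.ofReal (Real.Gamma ω) *
            ENNReal.ofReal (P w * U1 w ^ (ω - d / 2) * F1 w ^ (-ω)) := by
          rw [← ENNReal.ofReal_mul hπ.le, ← ENNReal.ofReal_mul (Real.Gamma_pos_of_pos hω).le]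
          congr 1
          have h1 : (1 : ℝ) / b w = U1 w / F1 w := by
            rw [hbdef]; simp only; rw [one_div_div]
          have h2 : U1 w ^ (-(d / 2)) * U1 w ^ ω = U1 w ^ (ω - d / 2) := by
            rw [← Real.rpow_add hU1]; congr 1; ring
          rw [h1, Real.div_rpow hU1.le hF1.le, hπ0def]
          simp only
          rw [Real.rpow_neg hF1.le ω, ← h2]
          ring
  rw [step1, step2, step3, step4, step5, lintegral_const_mul' _ _ ENNReal.ofReal_ne_top]
end

section
/- (Matrix-derivative identity eq. (A.12) from the algebraic proof of Lemma A.2.) With the matrix data below: for all indices 1 ≤ i, j, r, s ≤ L, one has Σ_{a,b=1}^{N} C^{bi}_{aj} · x_a · ∂_b Λ_{r,s} = Λ_{i,r}·δ_{j,s} + Λ_{i,s}·δ_{j,r}, as an identity in the polynomial ring ℂ[x_1,…,x_N]. -/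
open Finset

noncomputable section

/-- Kronecker delta, valued in `ℂ`. -/
def kd {α : Type*} [DecidableEq α] (i j : α) : ℂ := if i = j then 1 else 0

/-- Embedding of the loop indices `{1,…,L}` into `{1,…,M}`, `M = L + E`. -/
abbrev li {L : ℕ} (E : ℕ) (i : Fin L) : Fin (L + E) := Fin.castAdd E i

/-- Embedding of the external indices `{L+1,…,M}` into `{1,…,M}`. -/
abbrev xi (L : ℕ) {E : ℕ} (r : Fin E) : Fin (L + E) := Fin.natAdd L r

/-- The symmetric `L×L` matrix `Λ(x)` with entries
`Λ_{ij} = −((1+δ_{ij})/2)·Σ_a x_a·A_a^{{i,j}}`. -/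
def LamMat {L E n : ℕ} (A : Fin n → Fin (L + E) → Fin (L + E) → ℂ) :
    Matrix (Fin L) (Fin L) (MvPolynomial (Fin n) ℂ) := fun i j =>
  MvPolynomial.C (-(1 + kd i j) / 2) *
    ∑ a, MvPolynomial.C (A a (li E i) (li E j)) * MvPolynomial.X a

/-- The coefficients `C^{bi}_{aj}` of the momentum-space IBP relations:
`C^{bi}_{aj} = Σ_{m=1}^{M} A_a^{{i,m}} A^b_{{m,j}} (1+δ_{mi})` for `j ≤ L`, and
`C^{bi}_{aj} = Σ_{m=1}^{L} A_a^{{i,m}} A^b_{{m,j}} (1+δ_{mi})` for `j > L`. -/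
def Cc {L E n : ℕ} (A : Fin n → Fin (L + E) → Fin (L + E) → ℂ)
    (B : Fin (L + E) → Fin (L + E) → Fin n → ℂ)
    (b : Fin n) (i : Fin L) (a : Fin n) (j : Fin (L + E)) : ℂ :=
  if (j : ℕ) < L then
    ∑ m : Fin (L + E), A a (li E i) m * B m j b * (1 + kd m (li E i))
  else
    ∑ m ∈ univ.filter (fun m : Fin (L + E) => (m : ℕ) < L),
      A a (li E i) m * B m j b * (1 + kd m (li E i))

/-- Matrix-derivative identity (A.12):
`Σ_{a,b} C^{bi}_{aj} x_a ∂_b Λ_{r,s} = Λ_{i,r} δ_{j,s} + Λ_{i,s} δ_{j,r}` for loop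
indices `i, j, r, s ≤ L`.  Here `A` (entries `A_a^{{i,j}}`, symmetric in the pair) is an
invertible `N×N` matrix with inverse `B` (entries `A^b_{{i,j}} = B i j b`), the rows
indexed by `a ∈ {1,…,N}` and the columns by the unordered pairs `{i,j} ∈ Θ`,
i.e. pairs with at least one entry ≤ L. -/
theorem stmt_8 {L E n : ℕ} (hL : 1 ≤ L)
    (A : Fin n → Fin (L + E) → Fin (L + E) → ℂ)
    (B : Fin (L + E) → Fin (L + E) → Fin n → ℂ)
    (hAsymm : ∀ a i j, A a i j = A a j i)
    (hBsymm : ∀ i j b, B i j b = B j i b)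
    (hn : n = L * (L + 1) / 2 + L * E)
    (hBA : ∀ i j k l : Fin (L + E), ((i : ℕ) < L ∨ (j : ℕ) < L) →
      ((k : ℕ) < L ∨ (l : ℕ) < L) →
      ∑ a, B i j a * A a k l = if (i = k ∧ j = l) ∨ (i = l ∧ j = k) then 1 else 0)
    (hAB : ∀ a b : Fin n,
      (∑ i ∈ univ.filter (fun i : Fin (L + E) => (i : ℕ) < L),
        ∑ j ∈ univ.filter (fun j : Fin (L + E) => i ≤ j), A a i j * B i j b)
        = if a = b then 1 else 0)
    (i j r s : Fin L) :
    ∑ a, ∑ b, MvPolynomial.C (Cc A B b i a (li E j)) * MvPolynomial.X a *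
        MvPolynomial.pderiv b (LamMat A r s)
      = MvPolynomial.C (kd j s) * LamMat A i r + MvPolynomial.C (kd j r) * LamMat A i s := by
  classical
  have hkd : ∀ u v : Fin L, kd (li E u) (li E v) = kd u v := by
    intro u v; simp [kd, Fin.ext_iff]
  have kdsymm : ∀ u v : Fin L, kd u v = kd v u := by
    intro u v; simp [kd, eq_comm]
  -- derivative of Λ_{rs}
  have hds : ∀ b : Fin n, MvPolynomial.pderiv b (LamMat A r s)
      = MvPolynomial.C (-(1 + kd r s) / 2 * A b (li E r) (li E s)) := by
    intro b
    simp [LamMat, Finset.mul_sum, MvPolynomial.pderiv_X, Pi.single_apply, mul_ite,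
      Finset.sum_ite_eq', map_mul]
  -- key scalar identity
  have key : ∀ a : Fin n,
      ∑ b, Cc A B b i a (li E j) * (-(1 + kd r s) / 2 * A b (li E r) (li E s))
        = kd j s * (-(1 + kd i r) / 2) * A a (li E i) (li E r)
          + kd j r * (-(1 + kd i s) / 2) * A a (li E i) (li E s) := by
    intro a
    have hjL : ((li E j : Fin (L + E)) : ℕ) < L := by simpa using j.isLt
    have hCc : ∀ b, Cc A B b i a (li E j)
        = ∑ m : Fin (L + E), A a (li E i) m * B m (li E j) b * (1 + kd m (li E i)) := by
      intro b; simp [Cc, hjL]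
    calc ∑ b, Cc A B b i a (li E j) * (-(1 + kd r s) / 2 * A b (li E r) (li E s))
        = ∑ b, ∑ m : Fin (L + E),
            (A a (li E i) m * (1 + kd m (li E i)) * (-(1 + kd r s) / 2))
              * (B m (li E j) b * A b (li E r) (li E s)) := by
          refine Finset.sum_congr rfl fun b _ => ?_
          rw [hCc, Finset.sum_mul]
          exact Finset.sum_congr rfl fun m _ => by ring
      _ = ∑ m : Fin (L + E),
            (A a (li E i) m * (1 + kd m (li E i)) * (-(1 + kd r s) / 2))
              * (∑ b, B m (li E j) b * A b (li E r) (li E s)) := by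
          rw [Finset.sum_comm]
          exact Finset.sum_congr rfl fun m _ => (Finset.mul_sum _ _ _).symm
      _ = ∑ m : Fin (L + E),
            (A a (li E i) m * (1 + kd m (li E i)) * (-(1 + kd r s) / 2))
              * (if (m = li E r ∧ li E j = li E s) ∨ (m = li E s ∧ li E j = li E r)
                  then 1 else 0) := by
          refine Finset.sum_congr rfl fun m _ => ?_
          rw [hBA m (li E j) (li E r) (li E s) (Or.inr hjL) (Or.inl (by simp))]
      _ = _ := by
          have hli : ∀ u v : Fin L, li E u = li E v ↔ u = v := by
            intro u v; simp [Fin.ext_iff]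
          rcases eq_or_ne j s with hjs | hjs <;> rcases eq_or_ne j r with hjr | hjr
          · subst hjs; subst hjr
            have h1 : kd j j = (1 : ℂ) := if_pos rfl
            simp only [or_self, and_true, mul_ite, mul_one, mul_zero,
              Finset.sum_ite_eq', Finset.mem_univ, if_pos, hkd, h1, kdsymm j i]
            ring
          · subst hjs
            have h2 : li E j ≠ li E r := fun h => hjr ((hli j r).1 h)
            have h3 : kd j j = (1 : ℂ) := if_pos rfl
            have h4 : kd j r = (0 : ℂ) := if_neg hjr
            have h5 : kd r j = (0 : ℂ) := if_neg (Ne.symm hjr)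
            simp only [h2, and_true, and_false, false_and, or_false, if_false,
              eq_self_iff_true, true_and, mul_ite, mul_one, mul_zero,
              Finset.sum_ite_eq', Finset.mem_univ, if_pos, hkd, h3, h4, h5,
              kdsymm r i]
            ring
          · subst hjr
            have h2 : li E j ≠ li E s := fun h => hjs ((hli j s).1 h)
            have h3 : kd j j = (1 : ℂ) := if_pos rfl
            have h4 : kd j s = (0 : ℂ) := if_neg hjs
            have h5 : kd s j = (0 : ℂ) := if_neg (Ne.symm hjs)
            simp only [h2, and_true, and_false, false_and, or_false, false_or, if_false,
              eq_self_iff_true, true_and, mul_ite, mul_one, mul_zero,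
              Finset.sum_ite_eq', Finset.mem_univ, if_pos, hkd, h3, h4, h5,
              kdsymm s i, kdsymm j s]
            ring
          · have h2 : li E j ≠ li E s := fun h => hjs ((hli j s).1 h)
            have h2' : li E j ≠ li E r := fun h => hjr ((hli j r).1 h)
            have h4 : kd j s = (0 : ℂ) := if_neg hjs
            have h5 : kd j r = (0 : ℂ) := if_neg hjr
            simp [h2, h2', h4, h5]
  calc ∑ a, ∑ b, MvPolynomial.C (Cc A B b i a (li E j)) * MvPolynomial.X a *
        MvPolynomial.pderiv b (LamMat A r s)
      = ∑ a, MvPolynomial.C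
          (∑ b, Cc A B b i a (li E j) * (-(1 + kd r s) / 2 * A b (li E r) (li E s)))
          * MvPolynomial.X a := by
        refine Finset.sum_congr rfl fun a _ => ?_
        rw [map_sum, Finset.sum_mul]
        refine Finset.sum_congr rfl fun b _ => ?_
        rw [hds b, mul_right_comm, ← MvPolynomial.C_mul]
    _ = _ := by
        simp only [key, map_add, map_mul, LamMat, add_mul]
        rw [Finset.sum_add_distrib]
        congr 1 <;>
        · rw [Finset.mul_sum, Finset.mul_sum]
          exact Finset.sum_congr rfl fun a _ => by ring

end
end

section
/- (Jacobi-formula identity eq. (A.13) for the first Symanzik polynomial.) With the matrix data below: for all 1 ≤ i, j ≤ L one has Σ_{a,b=1}^{N} C^{bi}_{aj} · x_a · ∂_b 𝒰 = 2·δ_{ij}·𝒰, and for all 1 ≤ i ≤ L < j ≤ M one has Σ_{a,b=1}^{N} C^{bi}_{aj} · x_a · ∂_b 𝒰 = 0, as identities in the polynomial ring ℂ[x_1,…,x_N]. -/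
open Finset

noncomputable section

open MvPolynomial Matrix

lemma kd_li {L E : ℕ} (k l : Fin L) : kd (li E k) (li E l) = kd k l := by
  simp [kd]

lemma kd_symm {α : Type*} [DecidableEq α] (i j : α) : kd i j = kd j i := by
  simp [kd, eq_comm]

lemma pderiv_prod' {σ ι : Type*} [DecidableEq ι] [DecidableEq σ] (b : σ) (s : Finset ι)
    (f : ι → MvPolynomial σ ℂ) :
    pderiv b (∏ i ∈ s, f i) = ∑ i ∈ s, pderiv b (f i) * ∏ j ∈ s.erase i, f j := by
  classical
  induction s using Finset.induction_on with
  | empty => simp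
  | insert _ _ h ih =>
    rename_i a s
    rw [Finset.prod_insert h, pderiv_mul, ih, Finset.sum_insert h, Finset.erase_insert h,
      Finset.mul_sum]
    congr 1
    refine Finset.sum_congr rfl fun i hi => ?_
    rw [Finset.erase_insert_of_ne (by rintro rfl; exact h hi),
      Finset.prod_insert (fun hc => h (Finset.mem_of_mem_erase hc))]
    ring

lemma pderiv_det {m σ : Type*} [DecidableEq m] [Fintype m] [DecidableEq σ] (b : σ)
    (M : Matrix m m (MvPolynomial σ ℂ)) :
    pderiv b M.det = ∑ k, ∑ l, M.adjugate k l * pderiv b (M l k) := by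
  have h1 : ∀ k : m, (M.updateCol k fun r => pderiv b (M r k)).det
      = ∑ l, M.adjugate k l * pderiv b (M l k) := by
    intro k
    rw [← Matrix.cramer_apply, Matrix.cramer_eq_adjugate_mulVec]
    simp [Matrix.mulVec, dotProduct]
  have h2 : pderiv b M.det = ∑ k, (M.updateCol k fun r => pderiv b (M r k)).det := by
    rw [Matrix.det_apply, map_sum]
    have h3 : ∀ σp : Equiv.Perm m, pderiv b (Equiv.Perm.sign σp • ∏ i, M (σp i) i)
        = ∑ k, Equiv.Perm.sign σp • (pderiv b (M (σp k) k) * ∏ i ∈ univ.erase k, M (σp i) i) := by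
      intro σp
      rw [Units.smul_def, map_zsmul, pderiv_prod', Finset.smul_sum]
      simp [Units.smul_def]
    simp_rw [h3]
    rw [Finset.sum_comm]
    refine Finset.sum_congr rfl fun k _ => ?_
    rw [Matrix.det_apply]
    refine Finset.sum_congr rfl fun σp _ => ?_
    congr 1
    rw [← Finset.mul_prod_erase univ _ (Finset.mem_univ k)]
    congr 1
    · simp [Matrix.updateCol_apply]
    · refine Finset.prod_congr rfl fun i hi => ?_
      simp [Matrix.updateCol_apply, (Finset.ne_of_mem_erase hi)]
  rw [h2]
  exact Finset.sum_congr rfl fun k _ => h1 k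

lemma hpLam {L E n : ℕ} (A : Fin n → Fin (L + E) → Fin (L + E) → ℂ) (b : Fin n) (k l : Fin L) :
    pderiv b (LamMat A k l) = C (-(1 + kd k l) / 2 * A b (li E k) (li E l)) := by
  simp [LamMat, pderiv_X, Pi.single_apply, Finset.mul_sum, mul_ite,
    Finset.sum_ite_eq', _root_.map_mul]

lemma sum4_swap {ι₁ ι₂ ι₃ ι₄ M : Type*} [AddCommMonoid M]
    [Fintype ι₁] [Fintype ι₂] [Fintype ι₃] [Fintype ι₄]
    (f : ι₁ → ι₂ → ι₃ → ι₄ → M) :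
    ∑ a, ∑ b, ∑ c, ∑ d, f a b c d = ∑ c, ∑ d, ∑ a, ∑ b, f a b c d :=
  calc ∑ a, ∑ b, ∑ c, ∑ d, f a b c d
      = ∑ a, ∑ c, ∑ b, ∑ d, f a b c d :=
        Finset.sum_congr rfl fun a _ => Finset.sum_comm
    _ = ∑ c, ∑ a, ∑ b, ∑ d, f a b c d := Finset.sum_comm
    _ = ∑ c, ∑ a, ∑ d, ∑ b, f a b c d :=
        Finset.sum_congr rfl fun c _ => Finset.sum_congr rfl fun a _ => Finset.sum_comm
    _ = ∑ c, ∑ d, ∑ a, ∑ b, f a b c d :=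
        Finset.sum_congr rfl fun c _ => Finset.sum_comm

lemma stepA {L E n : ℕ} (A : Fin n → Fin (L + E) → Fin (L + E) → ℂ)
    (B : Fin (L + E) → Fin (L + E) → Fin n → ℂ) (i : Fin L) (j' : Fin (L + E)) :
    (∑ a, ∑ b, C (Cc A B b i a j') * X a * pderiv b (LamMat A).det)
    = ∑ k, ∑ l, (LamMat A).adjugate k l *
        ∑ a, MvPolynomial.X a *
          C (-(1 + kd l k) / 2 * ∑ b, Cc A B b i a j' * A b (li E l) (li E k)) := by
  simp_rw [pderiv_det, hpLam, Finset.mul_sum]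
  rw [sum4_swap]
  refine Finset.sum_congr rfl fun k _ => Finset.sum_congr rfl fun l _ =>
    Finset.sum_congr rfl fun a _ => ?_
  rw [map_sum (MvPolynomial.C (R := ℂ) (σ := Fin n)), Finset.mul_sum, Finset.mul_sum]
  refine Finset.sum_congr rfl fun b _ => ?_
  rw [_root_.map_mul, _root_.map_mul, _root_.map_mul]
  ring

section withBA

variable {L E n : ℕ} (A : Fin n → Fin (L + E) → Fin (L + E) → ℂ)
    (B : Fin (L + E) → Fin (L + E) → Fin n → ℂ)
    (hBA : ∀ i j k l : Fin (L + E), ((i : ℕ) < L ∨ (j : ℕ) < L) →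
      ((k : ℕ) < L ∨ (l : ℕ) < L) →
      ∑ a, B i j a * A a k l = if (i = k ∧ j = l) ∨ (i = l ∧ j = k) then 1 else 0)

include hBA

lemma hWint (i : Fin L) (a : Fin n) (j k l : Fin L) :
    ∑ b, Cc A B b i a (li E j) * A b (li E l) (li E k)
    = (if k = j then A a (li E i) (li E l) * (1 + kd (li E l) (li E i)) else 0)
      + (if l = j then A a (li E i) (li E k) * (1 + kd (li E k) (li E i)) else 0)
      - (if k = j ∧ l = j then A a (li E i) (li E j) * (1 + kd (li E j) (li E i)) else 0) := by
  simp only [Cc, Fin.coe_castAdd, Fin.is_lt, if_true]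
  simp_rw [Finset.sum_mul]
  rw [Finset.sum_comm]
  have hm : ∀ m : Fin (L + E),
      ∑ b, A a (li E i) m * B m (li E j) b * (1 + kd m (li E i)) * A b (li E l) (li E k)
      = A a (li E i) m * (1 + kd m (li E i)) *
        (if (m = li E l ∧ li E j = li E k) ∨ (m = li E k ∧ li E j = li E l) then 1 else 0) := by
    intro m
    rw [← hBA m (li E j) (li E l) (li E k) (Or.inr (by simp)) (Or.inl (by simp)),
      Finset.mul_sum]
    exact Finset.sum_congr rfl fun b _ => by ring
  simp_rw [hm]
  by_cases hkj : k = j <;> by_cases hlj : l = j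
  · simp [hkj, hlj, mul_ite, Finset.sum_ite_eq']
  · simp [hkj, hlj, Ne.symm hlj, mul_ite, Finset.sum_ite_eq']
  · simp [hkj, hlj, Ne.symm hkj, mul_ite, Finset.sum_ite_eq']
  · simp [hkj, hlj, Ne.symm hkj, Ne.symm hlj, mul_ite, Finset.sum_ite_eq']

lemma hWext (i : Fin L) (a : Fin n) (j : Fin E) (k l : Fin L) :
    ∑ b, Cc A B b i a (xi L j) * A b (li E l) (li E k) = 0 := by
  have hnlt : ¬ ((xi L j : Fin (L + E)) : ℕ) < L := by simp
  simp only [Cc, hnlt, if_false]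
  simp_rw [Finset.sum_mul]
  rw [Finset.sum_comm]
  have hm : ∀ m ∈ univ.filter (fun m : Fin (L + E) => (m : ℕ) < L),
      ∑ b, A a (li E i) m * B m (xi L j) b * (1 + kd m (li E i)) * A b (li E l) (li E k)
      = 0 := by
    intro m hmem
    have hmL : (m : ℕ) < L := by simpa using hmem
    have h1 : ∑ b, B m (xi L j) b * A b (li E l) (li E k)
        = if (m = li E l ∧ xi L j = li E k) ∨ (m = li E k ∧ xi L j = li E l) then 1 else 0 :=
      hBA m (xi L j) (li E l) (li E k) (Or.inl hmL) (Or.inl (by simp))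
    have h2 : ¬ ((m = li E l ∧ xi L j = li E k) ∨ (m = li E k ∧ xi L j = li E l)) := by
      rintro (⟨_, h⟩ | ⟨_, h⟩) <;>
        · have := congrArg (Fin.val) h
          simp [Fin.ext_iff] at this
          omega
    rw [if_neg h2] at h1
    calc ∑ b, A a (li E i) m * B m (xi L j) b * (1 + kd m (li E i)) * A b (li E l) (li E k)
        = A a (li E i) m * (1 + kd m (li E i)) * ∑ b, B m (xi L j) b * A b (li E l) (li E k) := by
          rw [Finset.mul_sum]; exact Finset.sum_congr rfl fun b _ => by ring
      _ = 0 := by rw [h1, mul_zero]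
  rw [Finset.sum_eq_zero hm]

end withBA

/-- key rewriting: `C c * Λ u v` as a single sum. -/
lemma hone {L E n : ℕ} (A : Fin n → Fin (L + E) → Fin (L + E) → ℂ) (c : ℂ) (u v : Fin L) :
    C c * LamMat A u v
    = ∑ a, X a * C (c * (-(1 + kd u v) / 2) * A a (li E u) (li E v)) := by
  simp only [LamMat, Finset.mul_sum]
  refine Finset.sum_congr rfl fun a _ => ?_
  rw [_root_.map_mul, _root_.map_mul]
  ring



lemma kd_self {α : Type*} [DecidableEq α] (j : α) : kd j j = 1 := by simp [kd]

section withBA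

variable {L E n : ℕ} (A : Fin n → Fin (L + E) → Fin (L + E) → ℂ)
    (B : Fin (L + E) → Fin (L + E) → Fin n → ℂ)
    (hBA : ∀ i j k l : Fin (L + E), ((i : ℕ) < L ∨ (j : ℕ) < L) →
      ((k : ℕ) < L ∨ (l : ℕ) < L) →
      ∑ a, B i j a * A a k l = if (i = k ∧ j = l) ∨ (i = l ∧ j = k) then 1 else 0)

include hBA

lemma hkl (i j k l : Fin L) :
    ∑ a, X a * C (-(1 + kd l k) / 2 * ∑ b, Cc A B b i a (li E j) * A b (li E l) (li E k))
    = (if k = j then C (1 + kd l k) * LamMat A i l else 0)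
      + (if l = j then C (1 + kd l k) * LamMat A i k else 0)
      + (if k = j ∧ l = j then C (-2) * LamMat A i j else 0) := by
  simp_rw [hWint A B hBA i _ j k l]
  by_cases hkj : k = j <;> by_cases hlj : l = j
  · rw [if_pos hkj, if_pos hlj, if_pos (⟨hkj, hlj⟩ : k = j ∧ l = j),
      hone A (1 + kd l k) i l, hone A (1 + kd l k) i k, hone A (-2) i j,
      ← Finset.sum_add_distrib, ← Finset.sum_add_distrib]
    refine Finset.sum_congr rfl fun a _ => ?_
    rw [if_pos hkj, if_pos hlj, if_pos (⟨hkj, hlj⟩ : k = j ∧ l = j),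
      ← mul_add, ← mul_add, ← _root_.map_add, ← _root_.map_add]
    congr 1
    simp only [kd_li]
    rw [kd_symm i l, kd_symm i k, kd_symm i j, hkj, hlj, kd_self]
    ring
  · rw [if_pos hkj, if_neg hlj, if_neg (fun h => hlj h.2), add_zero, add_zero,
      hone A (1 + kd l k) i l]
    refine Finset.sum_congr rfl fun a _ => ?_
    rw [if_pos hkj, if_neg hlj, if_neg (fun h => hlj h.2), add_zero, sub_zero]
    congr 1
    simp only [kd_li]
    rw [kd_symm i l]
    ring
  · rw [if_neg hkj, if_pos hlj, if_neg (fun h => hkj h.1), zero_add, add_zero,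
      hone A (1 + kd l k) i k]
    refine Finset.sum_congr rfl fun a _ => ?_
    rw [if_neg hkj, if_pos hlj, if_neg (fun h => hkj h.1), zero_add, sub_zero]
    congr 1
    simp only [kd_li]
    rw [kd_symm i k]
    ring
  · rw [if_neg hkj, if_neg hlj, if_neg (fun h => hkj h.1)]
    simp [hkj, hlj]

end withBA

lemma final {L E n : ℕ} (A : Fin n → Fin (L + E) → Fin (L + E) → ℂ)
    (hAsymm : ∀ a i j, A a i j = A a j i) (i j : Fin L) :
    ∑ k, ∑ l, (LamMat A).adjugate k l *
      ((if k = j then C (1 + kd l k) * LamMat A i l else 0)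
        + (if l = j then C (1 + kd l k) * LamMat A i k else 0)
        + (if k = j ∧ l = j then C (-2) * LamMat A i j else 0))
    = C (2 * kd i j) * (LamMat A).det := by
  have hΛsymm : (LamMat A)ᵀ = LamMat A := by
    refine Matrix.ext fun k l => ?_
    simp only [Matrix.transpose_apply, LamMat]
    rw [kd_symm l k]
    congr 1
    exact Finset.sum_congr rfl fun a _ => by rw [hAsymm a]
  have hadj : ∀ k l, (LamMat A).adjugate k l = (LamMat A).adjugate l k := by
    intro k l
    conv_lhs => rw [← hΛsymm, ← Matrix.adjugate_transpose]
    rfl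
  simp_rw [mul_add, Finset.sum_add_distrib]
  have hT1 : ∑ k, ∑ l, (LamMat A).adjugate k l *
        (if k = j then C (1 + kd l k) * LamMat A i l else 0)
      = ∑ l, (LamMat A).adjugate j l * (C (1 + kd l j) * LamMat A i l) := by
    rw [Finset.sum_comm]
    refine Finset.sum_congr rfl fun l _ => ?_
    simp_rw [mul_ite, mul_zero]
    rw [Finset.sum_ite_eq']
    simp
  have hT2 : ∑ k, ∑ l, (LamMat A).adjugate k l *
        (if l = j then C (1 + kd l k) * LamMat A i k else 0)
      = ∑ k, (LamMat A).adjugate k j * (C (1 + kd j k) * LamMat A i k) := by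
    refine Finset.sum_congr rfl fun k _ => ?_
    simp_rw [mul_ite, mul_zero]
    rw [Finset.sum_ite_eq']
    simp
  have hT3 : ∑ k, ∑ l, (LamMat A).adjugate k l *
        (if k = j ∧ l = j then C (-2) * LamMat A i j else 0)
      = (LamMat A).adjugate j j * (C (-2) * LamMat A i j) := by
    have hin : ∀ k : Fin L, (∑ l, (LamMat A).adjugate k l *
          (if k = j ∧ l = j then C (-2) * LamMat A i j else 0))
        = if k = j then (LamMat A).adjugate k j * (C (-2) * LamMat A i j) else 0 := by
      intro k
      by_cases hk : k = j
      · simp [hk, mul_ite, Finset.sum_ite_eq']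
      · simp [hk]
    rw [Finset.sum_congr rfl fun k _ => hin k, Finset.sum_ite_eq']
    simp
  rw [hT1, hT2, hT3]
  have hexp1 : ∀ l : Fin L, (LamMat A).adjugate j l * (C (1 + kd l j) * LamMat A i l)
      = LamMat A i l * (LamMat A).adjugate l j
        + (if l = j then LamMat A i l * (LamMat A).adjugate l j else 0) := by
    intro l
    rw [hadj j l]
    by_cases hl : l = j
    · rw [if_pos hl, hl, kd_self]
      have h2 : (C (1 + 1) : MvPolynomial (Fin n) ℂ) = 2 := by
        rw [_root_.map_add, MvPolynomial.C_1]; norm_num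
      rw [h2]
      ring
    · rw [if_neg hl]
      have h0 : kd l j = 0 := by simp [kd, hl]
      rw [h0, add_zero, MvPolynomial.C_1]
      ring
  have hexp2 : ∀ k : Fin L, (LamMat A).adjugate k j * (C (1 + kd j k) * LamMat A i k)
      = LamMat A i k * (LamMat A).adjugate k j
        + (if k = j then LamMat A i k * (LamMat A).adjugate k j else 0) := by
    intro k
    by_cases hk : k = j
    · rw [if_pos hk, hk, kd_self]
      have h2 : (C (1 + 1) : MvPolynomial (Fin n) ℂ) = 2 := by
        rw [_root_.map_add, MvPolynomial.C_1]; norm_num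
      rw [h2]
      ring
    · rw [if_neg hk]
      have h0 : kd j k = 0 := by simp only [kd]; rw [if_neg (Ne.symm hk)]
      rw [h0, add_zero, MvPolynomial.C_1]
      ring
  rw [Finset.sum_congr rfl fun l _ => hexp1 l, Finset.sum_congr rfl fun k _ => hexp2 k,
    Finset.sum_add_distrib, Finset.sum_ite_eq']
  simp only [mem_univ, if_true]

  have hmul : ∑ l, LamMat A i l * (LamMat A).adjugate l j
      = (LamMat A).det * (if i = j then 1 else 0) := by
    have := Matrix.mul_adjugate (LamMat A)
    have happ : (LamMat A * (LamMat A).adjugate) i j = ((LamMat A).det • (1 : Matrix (Fin L) (Fin L) (MvPolynomial (Fin n) ℂ))) i j := by rw [this]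
    rw [Matrix.mul_apply] at happ
    rw [happ, Matrix.smul_apply, Matrix.one_apply, smul_eq_mul]
  rw [hmul]
  have hC2 : (C (-2 : ℂ) : MvPolynomial (Fin n) ℂ) = -(C 2) := by rw [map_neg]
  have hC2' : (C (2 : ℂ) : MvPolynomial (Fin n) ℂ) = 2 := map_ofNat _ 2
  rw [hC2, hC2']
  by_cases hij : i = j
  · rw [if_pos hij, hij, kd_self, show (2 * (1:ℂ)) = 2 from by norm_num, hC2']
    ring
  · rw [if_neg hij]
    have h0 : kd i j = 0 := by simp [kd, hij]
    rw [h0, show (2 * (0:ℂ)) = 0 from by norm_num, map_zero]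
    ring



/-- Jacobi-formula identity (A.13) for the first Symanzik polynomial `𝒰 = det Λ(x)`:
`Σ_{a,b} C^{bi}_{aj} x_a ∂_b 𝒰 = 2δ_{ij}·𝒰` for `i, j ≤ L`, and
`Σ_{a,b} C^{bi}_{aj} x_a ∂_b 𝒰 = 0` for `i ≤ L < j ≤ M`. -/
theorem stmt_9 {L E n : ℕ} (hL : 1 ≤ L)
    (A : Fin n → Fin (L + E) → Fin (L + E) → ℂ)
    (B : Fin (L + E) → Fin (L + E) → Fin n → ℂ)
    (hAsymm : ∀ a i j, A a i j = A a j i)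
    (hBsymm : ∀ i j b, B i j b = B j i b)
    (hn : n = L * (L + 1) / 2 + L * E)
    (hBA : ∀ i j k l : Fin (L + E), ((i : ℕ) < L ∨ (j : ℕ) < L) →
      ((k : ℕ) < L ∨ (l : ℕ) < L) →
      ∑ a, B i j a * A a k l = if (i = k ∧ j = l) ∨ (i = l ∧ j = k) then 1 else 0)
    (hAB : ∀ a b : Fin n,
      (∑ i ∈ univ.filter (fun i : Fin (L + E) => (i : ℕ) < L),
        ∑ j ∈ univ.filter (fun j : Fin (L + E) => i ≤ j), A a i j * B i j b)
        = if a = b then 1 else 0) :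
    (∀ i j : Fin L,
      ∑ a, ∑ b, MvPolynomial.C (Cc A B b i a (li E j)) * MvPolynomial.X a *
          MvPolynomial.pderiv b (LamMat A).det
        = MvPolynomial.C (2 * kd i j) * (LamMat A).det) ∧
    (∀ (i : Fin L) (j : Fin E),
      ∑ a, ∑ b, MvPolynomial.C (Cc A B b i a (xi L j)) * MvPolynomial.X a *
          MvPolynomial.pderiv b (LamMat A).det = 0) := by
  constructor
  · intro i j
    rw [stepA A B i (li E j)]
    calc ∑ k, ∑ l, (LamMat A).adjugate k l *
          ∑ a, MvPolynomial.X a *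
            MvPolynomial.C (-(1 + kd l k) / 2 * ∑ b, Cc A B b i a (li E j) * A b (li E l) (li E k))
        = ∑ k, ∑ l, (LamMat A).adjugate k l *
            ((if k = j then MvPolynomial.C (1 + kd l k) * LamMat A i l else 0)
              + (if l = j then MvPolynomial.C (1 + kd l k) * LamMat A i k else 0)
              + (if k = j ∧ l = j then MvPolynomial.C (-2) * LamMat A i j else 0)) := by
          refine Finset.sum_congr rfl fun k _ => Finset.sum_congr rfl fun l _ => ?_
          rw [hkl A B hBA i j k l]
      _ = MvPolynomial.C (2 * kd i j) * (LamMat A).det := final A hAsymm i j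
  · intro i j
    rw [stepA A B i (xi L j)]
    simp_rw [hWext A B hBA i, mul_zero, map_zero, mul_zero, Finset.sum_const_zero]
    simp


end
end

section
/- (Lemma A.2 / Corollary 2.16, case j ≤ L: momentum-space IBP operators are parametric annihilators.) With the full matrix data below: for all 1 ≤ i, j ≤ L, one has Σ_{a,b=1}^{N} C^{bi}_{aj} · x_a · (∂_b 𝒢 − λ_b·𝒰) = 2·δ_{ij}·𝒢, as an identity in the polynomial ring ℂ[x_1,…,x_N]. (This polynomial identity is exactly the statement that the parametric IBP operator P̂_{ij} = d·δ_{ij} + Σ_{a,b} C^{bi}_{aj} x_a(∂_b + λ_b H) annihilates 𝒢^{−d/2}.) -/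
open Finset

noncomputable section

/-- The `L×L` matrix `S` with entries
`S_{ij} = (1/4)·Σ_{a,b} Σ_{r,s>L} g_{rs}·A_a^{{i,r}}·A_b^{{j,s}}·x_a·x_b`. -/
def SMat {L E n : ℕ} (A : Fin n → Fin (L + E) → Fin (L + E) → ℂ)
    (g : Fin E → Fin E → ℂ) :
    Matrix (Fin L) (Fin L) (MvPolynomial (Fin n) ℂ) := fun i j =>
  MvPolynomial.C ((1 : ℂ) / 4) * ∑ a, ∑ b, ∑ r, ∑ s,
    MvPolynomial.C (g r s * A a (li E i) (xi L r) * A b (li E j) (xi L s)) *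
      (MvPolynomial.X a * MvPolynomial.X b)

/-- `J = Σ_a λ_a x_a`. -/
def Jpoly {n : ℕ} (lam : Fin n → ℂ) : MvPolynomial (Fin n) ℂ :=
  ∑ a, MvPolynomial.C (lam a) * MvPolynomial.X a

/-- The second Symanzik polynomial
`ℱ = Σ_{i,j} (adjugate Λ)_{ij}·S_{ji} + 𝒰·J`. -/
def Fpoly {L E n : ℕ} (A : Fin n → Fin (L + E) → Fin (L + E) → ℂ)
    (g : Fin E → Fin E → ℂ) (lam : Fin n → ℂ) : MvPolynomial (Fin n) ℂ :=
  (∑ i, ∑ j, (LamMat A).adjugate i j * SMat A g j i) + (LamMat A).det * Jpoly lam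

/-- The Lee–Pomeransky polynomial `𝒢 = 𝒰 + ℱ`. -/
def Gpoly {L E n : ℕ} (A : Fin n → Fin (L + E) → Fin (L + E) → ℂ)
    (g : Fin E → Fin E → ℂ) (lam : Fin n → ℂ) : MvPolynomial (Fin n) ℂ :=
  (LamMat A).det + Fpoly A g lam


set_option maxRecDepth 4000

namespace IBP

open MvPolynomial

lemma kd_symm {α : Type*} [DecidableEq α] (i j : α) : kd i j = kd j i := by
  simp [kd, eq_comm]

lemma li_inj {L E : ℕ} {p q : Fin L} (h : li E p = li E q) : p = q := by
  apply Fin.ext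
  have := congrArg Fin.val h
  simpa using this

lemma kd_li_li {L E : ℕ} (p q : Fin L) : kd (li E p) (li E q) = kd p q := by
  unfold kd
  by_cases h : p = q
  · simp [h]
  · rw [if_neg h, if_neg (fun hh => h (li_inj hh))]

lemma li_ne_xi {L E : ℕ} (p : Fin L) (r : Fin E) : li E p ≠ xi L r := by
  intro h
  have := congrArg Fin.val h
  simp at this
  omega

lemma sum_pair_ind {M : ℕ} (f : Fin M → ℂ) (u v : Fin M) (P Q : Prop)
    [Decidable P] [Decidable Q] :
    ∑ m, f m * (if (m = u ∧ P) ∨ (m = v ∧ Q) then 1 else 0)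
      = (if P then f u else 0) + (if Q then f v else 0)
        - (if P ∧ Q ∧ u = v then f u else 0) := by
  by_cases hP : P <;> by_cases hQ : Q
  · by_cases huv : u = v
    · subst huv
      simp only [hP, hQ, and_true, or_self, if_pos (And.intro hP (And.intro hQ rfl))]
      simp [Finset.sum_ite_eq' Finset.univ u f]
    · simp only [hP, hQ, and_true, true_and, if_neg (fun h : P ∧ Q ∧ u = v => huv h.2.2),
        sub_zero]
      have : ∀ m : Fin M, (if m = u ∨ m = v then (1:ℂ) else 0)
          = (if m = u then 1 else 0) + (if m = v then 1 else 0) := by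
        intro m
        by_cases h1 : m = u <;> by_cases h2 : m = v <;>
          simp_all <;> exact huv (h1 ▸ h2 ▸ rfl)
      simp only [this, mul_add, Finset.sum_add_distrib]
      simp [Finset.sum_ite_eq' Finset.univ u f, Finset.sum_ite_eq' Finset.univ v f, huv]
  · simp [hP, hQ, Finset.sum_ite_eq' Finset.univ u f]
  · simp [hP, hQ, Finset.sum_ite_eq' Finset.univ v f]
  · simp [hP, hQ]


variable {n : ℕ}

/-- The IBP first-order operator with coefficients `co`. -/
def Dp (co : Fin n → Fin n → ℂ) (p : MvPolynomial (Fin n) ℂ) : MvPolynomial (Fin n) ℂ :=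
  ∑ a, ∑ b, MvPolynomial.C (co a b) * MvPolynomial.X a * MvPolynomial.pderiv b p

lemma Dp_add (co : Fin n → Fin n → ℂ) (p q : MvPolynomial (Fin n) ℂ) :
    Dp co (p + q) = Dp co p + Dp co q := by
  simp [Dp, mul_add, Finset.sum_add_distrib]

lemma Dp_sum (co : Fin n → Fin n → ℂ) {ι : Type*} (s : Finset ι)
    (f : ι → MvPolynomial (Fin n) ℂ) :
    Dp co (∑ k ∈ s, f k) = ∑ k ∈ s, Dp co (f k) := by
  classical
  induction s using Finset.induction_on with
  | empty => simp [Dp]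
  | insert a s ha ih =>
    rw [Finset.sum_insert ha, Dp_add, ih, Finset.sum_insert ha]

lemma Dp_C (co : Fin n → Fin n → ℂ) (c : ℂ) : Dp co (MvPolynomial.C c) = 0 := by
  simp [Dp, pderiv_C]

lemma Dp_mul (co : Fin n → Fin n → ℂ) (p q : MvPolynomial (Fin n) ℂ) :
    Dp co (p * q) = Dp co p * q + p * Dp co q := by
  simp only [Dp, pderiv_mul, mul_add, Finset.sum_add_distrib, Finset.sum_mul, Finset.mul_sum]
  refine congrArg₂ (· + ·) ?_ ?_ <;>
    exact Finset.sum_congr rfl fun a _ => Finset.sum_congr rfl fun b _ => by ring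

lemma Dp_C_mul (co : Fin n → Fin n → ℂ) (c : ℂ) (p : MvPolynomial (Fin n) ℂ) :
    Dp co (MvPolynomial.C c * p) = MvPolynomial.C c * Dp co p := by
  rw [Dp_mul, Dp_C]; ring

lemma Dp_one (co : Fin n → Fin n → ℂ) : Dp co 1 = 0 := by
  simpa using Dp_C co 1

lemma Dp_intCast (co : Fin n → Fin n → ℂ) (z : ℤ) :
    Dp co (z : MvPolynomial (Fin n) ℂ) = 0 := by
  have : ((z : MvPolynomial (Fin n) ℂ)) = MvPolynomial.C (z : ℂ) := by
    simp
  rw [this, Dp_C]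

lemma Dp_prod (co : Fin n → Fin n → ℂ) {ι : Type*} [DecidableEq ι] (s : Finset ι)
    (f : ι → MvPolynomial (Fin n) ℂ) :
    Dp co (∏ k ∈ s, f k) = ∑ k ∈ s, (∏ l ∈ s.erase k, f l) * Dp co (f k) := by
  induction s using Finset.induction_on with
  | empty => simp [Dp_one]
  | insert a s ha ih =>
    rw [Finset.prod_insert ha, Dp_mul, ih, Finset.sum_insert ha, Finset.erase_insert ha,
      Finset.mul_sum]
    congr 1
    · ring
    · refine Finset.sum_congr rfl fun k hk => ?_
      rw [Finset.erase_insert_of_ne (by rintro rfl; exact ha hk),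
        Finset.prod_insert (fun h => ha (Finset.mem_of_mem_erase h))]
      ring


lemma Dp_zero (co : Fin n → Fin n → ℂ) : Dp co (0 : MvPolynomial (Fin n) ℂ) = 0 := by
  simpa using Dp_C co 0

lemma Dp_def (co : Fin n → Fin n → ℂ) (p : MvPolynomial (Fin n) ℂ) :
    Dp co p = ∑ a, ∑ b, MvPolynomial.C (co a b) * MvPolynomial.X a *
      MvPolynomial.pderiv b p := rfl

lemma Dp_det {L : ℕ} (co : Fin n → Fin n → ℂ)
    (M : Matrix (Fin L) (Fin L) (MvPolynomial (Fin n) ℂ)) :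
    Dp co M.det = ∑ k, ∑ m, M.adjugate k m * Dp co (M m k) := by
  have hrhs : ∀ k : Fin L, ∑ m, M.adjugate k m * Dp co (M m k)
      = (M.updateCol k (fun m => Dp co (M m k))).det := by
    intro k
    have := congrFun (Matrix.cramer_eq_adjugate_mulVec M (fun m => Dp co (M m k))) k
    rw [Matrix.cramer_apply] at this
    rw [this]
    simp [Matrix.mulVec, dotProduct]
  have expand : ∀ k : Fin L, (M.updateCol k (fun m => Dp co (M m k))).det
      = ∑ σ : Equiv.Perm (Fin L), ((Equiv.Perm.sign σ : ℤ) : MvPolynomial (Fin n) ℂ) *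
          (Dp co (M (σ k) k) * ∏ l ∈ univ.erase k, M (σ l) l) := by
    intro k
    rw [Matrix.det_apply']
    refine Finset.sum_congr rfl fun σ _ => ?_
    congr 1
    rw [← Finset.mul_prod_erase _ _ (Finset.mem_univ k)]
    congr 1
    · simp [Matrix.updateCol_apply]
    · exact Finset.prod_congr rfl fun l hl => by
        simp [Matrix.updateCol_apply, (Finset.mem_erase.1 hl).1]
  rw [Matrix.det_apply', Dp_sum]
  have step : ∀ σ : Equiv.Perm (Fin L),
      Dp co (((Equiv.Perm.sign σ : ℤ) : MvPolynomial (Fin n) ℂ) * ∏ l, M (σ l) l)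
      = ∑ k, ((Equiv.Perm.sign σ : ℤ) : MvPolynomial (Fin n) ℂ) *
          ((∏ l ∈ univ.erase k, M (σ l) l) * Dp co (M (σ k) k)) := by
    intro σ
    rw [Dp_mul, Dp_intCast, zero_mul, zero_add, Dp_prod, Finset.mul_sum]
  calc ∑ σ : Equiv.Perm (Fin L),
        Dp co (((Equiv.Perm.sign σ : ℤ) : MvPolynomial (Fin n) ℂ) * ∏ l, M (σ l) l)
      = ∑ σ : Equiv.Perm (Fin L), ∑ k, ((Equiv.Perm.sign σ : ℤ) : MvPolynomial (Fin n) ℂ) *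
          ((∏ l ∈ univ.erase k, M (σ l) l) * Dp co (M (σ k) k)) :=
        Finset.sum_congr rfl fun σ _ => step σ
    _ = ∑ k, ∑ σ : Equiv.Perm (Fin L), ((Equiv.Perm.sign σ : ℤ) : MvPolynomial (Fin n) ℂ) *
          ((∏ l ∈ univ.erase k, M (σ l) l) * Dp co (M (σ k) k)) := Finset.sum_comm
    _ = ∑ k, ∑ m, M.adjugate k m * Dp co (M m k) := by
        refine Finset.sum_congr rfl fun k _ => ?_
        rw [hrhs k, expand k]
        exact Finset.sum_congr rfl fun σ _ => by ring


variable {L E : ℕ} (A : Fin n → Fin (L + E) → Fin (L + E) → ℂ)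
    (B : Fin (L + E) → Fin (L + E) → Fin n → ℂ) (i j : Fin L)

lemma li_eq_li {p q : Fin L} : li E p = li E q ↔ p = q :=
  ⟨li_inj, fun h => h ▸ rfl⟩

lemma li_lt (p : Fin L) : ((li E p : Fin (L + E)) : ℕ) < L := by simp

/-- Summing the IBP coefficients against a column of `A`. -/
lemma Cc_A_sum (hBA : ∀ i' j' k' l' : Fin (L + E), ((i' : ℕ) < L ∨ (j' : ℕ) < L) →
      ((k' : ℕ) < L ∨ (l' : ℕ) < L) →
      ∑ a, B i' j' a * A a k' l' = if (i' = k' ∧ j' = l') ∨ (i' = l' ∧ j' = k') then 1 else 0)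
    (a : Fin n) (u v : Fin (L + E)) (huv : (u : ℕ) < L ∨ (v : ℕ) < L) :
    ∑ b, Cc A B b i a (li E j) * A b u v
      = ∑ m : Fin (L + E), (A a (li E i) m * (1 + kd m (li E i))) *
          (if (m = u ∧ li E j = v) ∨ (m = v ∧ li E j = u) then 1 else 0) := by
  have hcc : ∀ b, Cc A B b i a (li E j)
      = ∑ m : Fin (L + E), A a (li E i) m * B m (li E j) b * (1 + kd m (li E i)) := by
    intro b
    rw [Cc, if_pos (li_lt j)]
  calc ∑ b, Cc A B b i a (li E j) * A b u v
      = ∑ b, ∑ m : Fin (L + E),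
          (A a (li E i) m * (1 + kd m (li E i))) * (B m (li E j) b * A b u v) := by
        refine Finset.sum_congr rfl fun b _ => ?_
        rw [hcc b, Finset.sum_mul]
        exact Finset.sum_congr rfl fun m _ => by ring
    _ = ∑ m : Fin (L + E), (A a (li E i) m * (1 + kd m (li E i))) *
          ∑ b, B m (li E j) b * A b u v := by
        rw [Finset.sum_comm]
        exact Finset.sum_congr rfl fun m _ => by rw [Finset.mul_sum]
    _ = _ := by
        refine Finset.sum_congr rfl fun m _ => ?_
        rw [hBA m (li E j) u v (Or.inr (li_lt j)) huv]

/-- The key scalar identity behind `Dp Λ`. -/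
lemma key_scalar (hBA : ∀ i' j' k' l' : Fin (L + E), ((i' : ℕ) < L ∨ (j' : ℕ) < L) →
      ((k' : ℕ) < L ∨ (l' : ℕ) < L) →
      ∑ a, B i' j' a * A a k' l' = if (i' = k' ∧ j' = l') ∨ (i' = l' ∧ j' = k') then 1 else 0)
    (a : Fin n) (k l : Fin L) :
    ∑ b, Cc A B b i a (li E j) * (-(1 + kd k l) / 2 * A b (li E k) (li E l))
      = kd j k * (-(1 + kd i l) / 2 * A a (li E i) (li E l))
        + kd j l * (-(1 + kd i k) / 2 * A a (li E i) (li E k)) := by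
  have h1 : ∑ b, Cc A B b i a (li E j) * (-(1 + kd k l) / 2 * A b (li E k) (li E l))
      = (-(1 + kd k l) / 2) * ∑ b, Cc A B b i a (li E j) * A b (li E k) (li E l) := by
    rw [Finset.mul_sum]; exact Finset.sum_congr rfl fun b _ => by ring
  rw [h1, Cc_A_sum A B i j hBA a (li E k) (li E l) (Or.inl (li_lt k)),
    sum_pair_ind (fun m => A a (li E i) m * (1 + kd m (li E i))) (li E k) (li E l)
      (li E j = li E l) (li E j = li E k)]
  clear h1 hBA
  simp only [li_eq_li, kd_li_li]
  unfold kd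
  split_ifs <;> subst_vars <;> first | ring1 | tauto


lemma pderiv_Lam (b : Fin n) (k l : Fin L) :
    MvPolynomial.pderiv b (LamMat A k l)
      = MvPolynomial.C (-(1 + kd k l) / 2 * A b (li E k) (li E l)) := by
  rw [LamMat, pderiv_C_mul, map_sum]
  have : ∀ a : Fin n, MvPolynomial.pderiv b
        (MvPolynomial.C (A a (li E k) (li E l)) * MvPolynomial.X a)
      = if a = b then MvPolynomial.C (A a (li E k) (li E l)) else 0 := by
    intro a
    rw [pderiv_C_mul, pderiv_X, Pi.single_apply]
    split_ifs with h
    · subst h; simp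
    · simp [h]  -- careful: condition in pderiv_X is?
  rw [Finset.sum_congr rfl fun a _ => this a, Finset.sum_ite_eq' Finset.univ b
    (fun a => MvPolynomial.C (A a (li E k) (li E l)))]
  simp [map_mul]


/-- `Dp` applied to an entry of `Λ`. -/
lemma Dp_Lam (hBA : ∀ i' j' k' l' : Fin (L + E), ((i' : ℕ) < L ∨ (j' : ℕ) < L) →
      ((k' : ℕ) < L ∨ (l' : ℕ) < L) →
      ∑ a, B i' j' a * A a k' l' = if (i' = k' ∧ j' = l') ∨ (i' = l' ∧ j' = k') then 1 else 0)
    (k l : Fin L) :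
    Dp (fun a b => Cc A B b i a (li E j)) (LamMat A k l)
      = MvPolynomial.C (kd j k) * LamMat A i l + MvPolynomial.C (kd j l) * LamMat A i k := by
  rw [Dp_def]
  have lhs : ∀ a : Fin n, ∑ b, MvPolynomial.C (Cc A B b i a (li E j)) * MvPolynomial.X a *
        MvPolynomial.pderiv b (LamMat A k l)
      = MvPolynomial.C (kd j k * (-(1 + kd i l) / 2 * A a (li E i) (li E l))
          + kd j l * (-(1 + kd i k) / 2 * A a (li E i) (li E k))) * MvPolynomial.X a := by
    intro a
    have : ∀ b : Fin n, MvPolynomial.C (Cc A B b i a (li E j)) * MvPolynomial.X a *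
          MvPolynomial.pderiv b (LamMat A k l)
        = MvPolynomial.C (Cc A B b i a (li E j) * (-(1 + kd k l) / 2 * A b (li E k) (li E l)))
            * MvPolynomial.X a := by
      intro b
      rw [pderiv_Lam A, mul_right_comm, ← map_mul]
    rw [Finset.sum_congr rfl fun b _ => this b, ← Finset.sum_mul, ← map_sum,
      key_scalar A B i j hBA a k l]
  rw [Finset.sum_congr rfl fun a _ => lhs a]
  have piece : ∀ (c : ℂ) (p q : Fin L), MvPolynomial.C c * LamMat A p q
      = ∑ a, MvPolynomial.C (c * (-(1 + kd p q) / 2 * A a (li E p) (li E q)))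
          * MvPolynomial.X a := by
    intro c p q
    rw [LamMat, ← mul_assoc, ← map_mul, Finset.mul_sum]
    exact Finset.sum_congr rfl fun a _ => by
      rw [← mul_assoc, ← map_mul, mul_assoc]
  rw [piece, piece, ← Finset.sum_add_distrib]
  exact Finset.sum_congr rfl fun a _ => by rw [← add_mul, ← map_add]



lemma sum_swap4 {α β γ δ M : Type*} [Fintype α] [Fintype β] [Fintype γ] [Fintype δ]
    [AddCommMonoid M] (f : α → β → γ → δ → M) :
    ∑ a, ∑ b, ∑ r, ∑ s, f a b r s = ∑ r, ∑ s, ∑ a, ∑ b, f a b r s := by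
  calc ∑ a, ∑ b, ∑ r, ∑ s, f a b r s
      = ∑ a, ∑ r, ∑ s, ∑ b, f a b r s :=
        Finset.sum_congr rfl fun a _ => by
          rw [Finset.sum_comm]
          exact Finset.sum_congr rfl fun r _ => Finset.sum_comm
    _ = ∑ r, ∑ a, ∑ s, ∑ b, f a b r s := Finset.sum_comm
    _ = ∑ r, ∑ s, ∑ a, ∑ b, f a b r s :=
        Finset.sum_congr rfl fun r _ => Finset.sum_comm

/-- The linear form attached to a pair of indices. -/
def Pl (u v : Fin (L + E)) : MvPolynomial (Fin n) ℂ :=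
  ∑ a, MvPolynomial.C (A a u v) * MvPolynomial.X a

lemma SMat_eq (g : Fin E → Fin E → ℂ) (k l : Fin L) :
    SMat A g k l = MvPolynomial.C ((1 : ℂ) / 4) * ∑ r, ∑ s,
      MvPolynomial.C (g r s) * (Pl A (li E k) (xi L r) * Pl A (li E l) (xi L s)) := by
  rw [SMat]
  congr 1
  rw [sum_swap4]
  refine Finset.sum_congr rfl fun r _ => Finset.sum_congr rfl fun s _ => ?_
  rw [Pl, Pl, Finset.sum_mul_sum, Finset.mul_sum]
  refine Finset.sum_congr rfl fun a _ => ?_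
  rw [Finset.mul_sum]
  refine Finset.sum_congr rfl fun b _ => ?_
  rw [map_mul, map_mul]
  ring

/-- Contraction of the IBP coefficients with a mixed column of `A`. -/
lemma key_scalar2 (hBA : ∀ i' j' k' l' : Fin (L + E), ((i' : ℕ) < L ∨ (j' : ℕ) < L) →
      ((k' : ℕ) < L ∨ (l' : ℕ) < L) →
      ∑ a, B i' j' a * A a k' l' = if (i' = k' ∧ j' = l') ∨ (i' = l' ∧ j' = k') then 1 else 0)
    (a : Fin n) (k : Fin L) (r : Fin E) :
    ∑ b, Cc A B b i a (li E j) * A b (li E k) (xi L r)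
      = kd j k * A a (li E i) (xi L r) := by
  rw [Cc_A_sum A B i j hBA a (li E k) (xi L r) (Or.inl (li_lt k)),
    sum_pair_ind (fun m => A a (li E i) m * (1 + kd m (li E i))) (li E k) (xi L r)
      (li E j = xi L r) (li E j = li E k)]
  rw [if_neg (li_ne_xi j r),
    if_neg (show ¬((li E j = xi L r) ∧ (li E j = li E k) ∧ (li E k = xi L r)) from
      fun h => li_ne_xi j r h.1)]
  have hz : kd (xi L r) (li E i) = 0 := by
    unfold kd
    rw [if_neg (fun h => li_ne_xi i r h.symm)]
  rw [hz]
  simp only [li_eq_li]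
  unfold kd
  by_cases hjk : j = k <;> simp [hjk]

/-- `Dp` applied to a loop-external linear form. -/
lemma Dp_Pl_lx (hBA : ∀ i' j' k' l' : Fin (L + E), ((i' : ℕ) < L ∨ (j' : ℕ) < L) →
      ((k' : ℕ) < L ∨ (l' : ℕ) < L) →
      ∑ a, B i' j' a * A a k' l' = if (i' = k' ∧ j' = l') ∨ (i' = l' ∧ j' = k') then 1 else 0)
    (k : Fin L) (r : Fin E) :
    Dp (fun a b => Cc A B b i a (li E j)) (Pl A (li E k) (xi L r))
      = MvPolynomial.C (kd j k) * Pl A (li E i) (xi L r) := by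
  rw [Dp_def, Pl]
  have lhs : ∀ a : Fin n, ∑ b, MvPolynomial.C (Cc A B b i a (li E j)) * MvPolynomial.X a *
        MvPolynomial.pderiv b (∑ c, MvPolynomial.C (A c (li E k) (xi L r)) * MvPolynomial.X c)
      = MvPolynomial.C (kd j k * A a (li E i) (xi L r)) * MvPolynomial.X a := by
    intro a
    have hp : ∀ b : Fin n, MvPolynomial.pderiv b
          (∑ c, MvPolynomial.C (A c (li E k) (xi L r)) * MvPolynomial.X c)
        = MvPolynomial.C (A b (li E k) (xi L r)) := by
      intro b
      rw [map_sum]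
      have : ∀ c : Fin n, MvPolynomial.pderiv b
            (MvPolynomial.C (A c (li E k) (xi L r)) * MvPolynomial.X c)
          = if c = b then MvPolynomial.C (A c (li E k) (xi L r)) else 0 := by
        intro c
        rw [pderiv_C_mul, pderiv_X, Pi.single_apply]
        split_ifs with h
        · subst h; simp
        · simp
      rw [Finset.sum_congr rfl fun c _ => this c, Finset.sum_ite_eq' Finset.univ b
        (fun c => MvPolynomial.C (A c (li E k) (xi L r)))]
      simp
    have : ∀ b : Fin n, MvPolynomial.C (Cc A B b i a (li E j)) * MvPolynomial.X a *
          MvPolynomial.pderiv b (∑ c, MvPolynomial.C (A c (li E k) (xi L r)) * MvPolynomial.X c)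
        = MvPolynomial.C (Cc A B b i a (li E j) * A b (li E k) (xi L r)) * MvPolynomial.X a := by
      intro b
      rw [hp b, mul_right_comm, ← map_mul]
    rw [Finset.sum_congr rfl fun b _ => this b, ← Finset.sum_mul, ← map_sum,
      key_scalar2 A B i j hBA a k r]
  rw [Finset.sum_congr rfl fun a _ => lhs a, Pl, Finset.mul_sum]
  exact Finset.sum_congr rfl fun a _ => by rw [← mul_assoc, ← map_mul]

/-- `Dp` applied to an entry of `S`. -/
lemma Dp_S (hBA : ∀ i' j' k' l' : Fin (L + E), ((i' : ℕ) < L ∨ (j' : ℕ) < L) →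
      ((k' : ℕ) < L ∨ (l' : ℕ) < L) →
      ∑ a, B i' j' a * A a k' l' = if (i' = k' ∧ j' = l') ∨ (i' = l' ∧ j' = k') then 1 else 0)
    (g : Fin E → Fin E → ℂ) (k l : Fin L) :
    Dp (fun a b => Cc A B b i a (li E j)) (SMat A g k l)
      = MvPolynomial.C (kd j k) * SMat A g i l + MvPolynomial.C (kd j l) * SMat A g k i := by
  rw [SMat_eq, Dp_C_mul, Dp_sum]
  have step : ∀ r : Fin E, Dp (fun a b => Cc A B b i a (li E j))
        (∑ s, MvPolynomial.C (g r s) * (Pl A (li E k) (xi L r) * Pl A (li E l) (xi L s)))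
      = ∑ s, MvPolynomial.C (g r s) *
          (MvPolynomial.C (kd j k) * (Pl A (li E i) (xi L r) * Pl A (li E l) (xi L s))
            + MvPolynomial.C (kd j l) * (Pl A (li E k) (xi L r) * Pl A (li E i) (xi L s))) := by
    intro r
    rw [Dp_sum]
    refine Finset.sum_congr rfl fun s _ => ?_
    rw [Dp_C_mul, Dp_mul, Dp_Pl_lx A B i j hBA k r, Dp_Pl_lx A B i j hBA l s]
    ring
  rw [Finset.sum_congr rfl fun r _ => step r, SMat_eq, SMat_eq]
  simp only [Finset.mul_sum, mul_add, Finset.sum_add_distrib]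
  refine congrArg₂ (· + ·) ?_ ?_ <;>
    exact Finset.sum_congr rfl fun r _ => Finset.sum_congr rfl fun s _ => by ring


lemma Lam_symm (hAsymm : ∀ a u v, A a u v = A a v u) (k l : Fin L) :
    LamMat A k l = LamMat A l k := by
  rw [LamMat, LamMat, kd_symm]
  congr 1
  exact Finset.sum_congr rfl fun a _ => by rw [hAsymm]

lemma C_kd (p q : Fin L) : (MvPolynomial.C (kd p q) : MvPolynomial (Fin n) ℂ)
    = if p = q then 1 else 0 := by
  unfold kd
  split_ifs <;> simp

/-- `Λ` evaluates to the identity matrix at a suitable point, so `det Λ ≠ 0`. -/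
lemma Lam_det_ne_zero
    (hBA : ∀ i' j' k' l' : Fin (L + E), ((i' : ℕ) < L ∨ (j' : ℕ) < L) →
      ((k' : ℕ) < L ∨ (l' : ℕ) < L) →
      ∑ a, B i' j' a * A a k' l' = if (i' = k' ∧ j' = l') ∨ (i' = l' ∧ j' = k') then 1 else 0) :
    (LamMat A (E := E)).det ≠ 0 := by
  intro hdet
  set xs : Fin n → ℂ := fun a => -∑ p : Fin L, B (li E p) (li E p) a with hxs
  have heval : ∀ k l : Fin L, MvPolynomial.eval xs (LamMat A k l)
      = (1 : Matrix (Fin L) (Fin L) ℂ) k l := by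
    intro k l
    have h1 : ∑ a, A a (li E k) (li E l) * xs a
        = -∑ p : Fin L, ∑ a, B (li E p) (li E p) a * A a (li E k) (li E l) := by
      have step : ∀ a : Fin n, A a (li E k) (li E l) * xs a
          = -∑ p : Fin L, B (li E p) (li E p) a * A a (li E k) (li E l) := by
        intro a
        rw [hxs]
        simp only [mul_neg, Finset.mul_sum, neg_inj]
        exact Finset.sum_congr rfl fun p _ => by ring
      rw [Finset.sum_congr rfl fun a _ => step a, Finset.sum_neg_distrib, Finset.sum_comm]
    have h2 : ∀ p : Fin L, ∑ a, B (li E p) (li E p) a * A a (li E k) (li E l)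
        = if p = k ∧ p = l then (1:ℂ) else 0 := by
      intro p
      rw [hBA (li E p) (li E p) (li E k) (li E l) (Or.inl (li_lt p)) (Or.inl (li_lt k))]
      congr 1
      simp only [li_eq_li, eq_iff_iff]
      tauto
    have h3 : ∑ p : Fin L, (if p = k ∧ p = l then (1:ℂ) else 0)
        = if k = l then 1 else 0 := by
      by_cases h : k = l
      · subst h
        simp
      · rw [if_neg h]
        refine Finset.sum_eq_zero fun p _ => ?_
        rw [if_neg]
        rintro ⟨ha, hb⟩
        exact h (ha.symm.trans hb)
    have h4 : ∑ a, A a (li E k) (li E l) * xs a = -(if k = l then (1:ℂ) else 0) := by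
      rw [h1, Finset.sum_congr rfl fun p _ => h2 p, h3]
    have h5 : MvPolynomial.eval xs (LamMat A k l)
        = -(1 + kd k l) / 2 * ∑ a, A a (li E k) (li E l) * xs a := by
      rw [LamMat]
      simp [Finset.sum_congr, map_sum]
    rw [h5, h4, Matrix.one_apply]
    unfold kd
    by_cases h : k = l <;> simp [h] <;> ring
  have hmap : (LamMat A).map (MvPolynomial.eval xs) = 1 := by
    ext k l
    rw [Matrix.map_apply]
    exact heval k l
  have h2 : ((LamMat A).map (MvPolynomial.eval xs)).det = (1:ℂ) := by
    rw [hmap, Matrix.det_one]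
  have h3 := (RingHom.map_det (MvPolynomial.eval xs) (LamMat A)).trans h2
  rw [hdet] at h3
  simp at h3


lemma sum_mul_kd (f : Fin L → MvPolynomial (Fin n) ℂ) (p : Fin L) :
    ∑ m, f m * MvPolynomial.C (kd p m) = f p := by
  simp only [C_kd, mul_ite, mul_one, mul_zero]
  simp [Finset.sum_ite_eq]

lemma sum_kd_mul (f : Fin L → MvPolynomial (Fin n) ℂ) (p : Fin L) :
    ∑ m, MvPolynomial.C (kd p m) * f m = f p := by
  simp only [C_kd, ite_mul, one_mul, zero_mul]
  simp [Finset.sum_ite_eq]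

lemma sum_adj_Lam (k l : Fin L) :
    ∑ m, (LamMat A).adjugate k m * LamMat A m l
      = if k = l then (LamMat A (E := E)).det else 0 := by
  rw [← Matrix.mul_apply, Matrix.adjugate_mul, Matrix.smul_apply, Matrix.one_apply]
  by_cases h : k = l <;> simp [h]

lemma sum_Lam_adj (k l : Fin L) :
    ∑ m, LamMat A k m * (LamMat A).adjugate m l
      = if k = l then (LamMat A (E := E)).det else 0 := by
  rw [← Matrix.mul_apply, Matrix.mul_adjugate, Matrix.smul_apply, Matrix.one_apply]
  by_cases h : k = l <;> simp [h]

/-- `Dp` applied to `det Λ`. -/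
lemma Dp_det_Lam (hAsymm : ∀ a u v, A a u v = A a v u)
    (hBA : ∀ i' j' k' l' : Fin (L + E), ((i' : ℕ) < L ∨ ((j' : ℕ) < L)) →
      ((k' : ℕ) < L ∨ (l' : ℕ) < L) →
      ∑ a, B i' j' a * A a k' l' = if (i' = k' ∧ j' = l') ∨ (i' = l' ∧ j' = k') then 1 else 0) :
    Dp (fun a b => Cc A B b i a (li E j)) (LamMat A).det
      = MvPolynomial.C (2 * kd i j) * (LamMat A (E := E)).det := by
  rw [Dp_det]
  have step : ∀ k m : Fin L, (LamMat A).adjugate k m *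
        Dp (fun a b => Cc A B b i a (li E j)) (LamMat A m k)
      = (LamMat A).adjugate k m * MvPolynomial.C (kd j m) * LamMat A i k
        + MvPolynomial.C (kd j k) * ((LamMat A).adjugate k m * LamMat A m i) := by
    intro k m
    rw [Dp_Lam A B i j hBA m k, Lam_symm A hAsymm i m]
    ring
  calc ∑ k, ∑ m, (LamMat A).adjugate k m *
        Dp (fun a b => Cc A B b i a (li E j)) (LamMat A m k)
      = ∑ k, ∑ m, ((LamMat A).adjugate k m * MvPolynomial.C (kd j m) * LamMat A i k
          + MvPolynomial.C (kd j k) * ((LamMat A).adjugate k m * LamMat A m i)) :=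
        Finset.sum_congr rfl fun k _ => Finset.sum_congr rfl fun m _ => step k m
    _ = ∑ k, ((LamMat A).adjugate k j * LamMat A i k
          + MvPolynomial.C (kd j k) * (if k = i then (LamMat A).det else 0)) := by
        refine Finset.sum_congr rfl fun k _ => ?_
        rw [Finset.sum_add_distrib, ← Finset.mul_sum, sum_adj_Lam A k i]
        congr 1
        have : ∀ m : Fin L, (LamMat A).adjugate k m * MvPolynomial.C (kd j m) * LamMat A i k
            = ((LamMat A).adjugate k m * MvPolynomial.C (kd j m)) * LamMat A i k := by
          intro m; ring
        rw [Finset.sum_congr rfl fun m _ => this m, ← Finset.sum_mul, sum_mul_kd]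
    _ = (∑ k, LamMat A i k * (LamMat A).adjugate k j)
          + ∑ k, MvPolynomial.C (kd j k) * (if k = i then (LamMat A).det else 0) := by
        rw [Finset.sum_add_distrib]
        congr 1
        exact Finset.sum_congr rfl fun k _ => by ring
    _ = (if i = j then (LamMat A).det else 0) + (if j = i then (LamMat A).det else 0) := by
        rw [sum_Lam_adj A i j]
        congr 1
        rw [sum_kd_mul (fun k => if k = i then (LamMat A).det else 0) j]
    _ = MvPolynomial.C (2 * kd i j) * (LamMat A).det := by
        unfold kd
        by_cases h : i = j
        · subst h
          norm_num
          rw [map_ofNat]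
          ring
        · rw [if_neg h, if_neg (fun hh => h hh.symm)]
          simp [h]

lemma mat_cancel (hdet : (LamMat A (E := E)).det ≠ 0)
    (P Q : Matrix (Fin L) (Fin L) (MvPolynomial (Fin n) ℂ))
    (h : P * LamMat A = Q * LamMat A) : P = Q := by
  have h2 : (P - Q) * LamMat A = 0 := by rw [sub_mul, h, sub_self]
  have h3 : (P - Q) * (LamMat A * (LamMat A).adjugate) = 0 := by
    rw [← Matrix.mul_assoc, h2, Matrix.zero_mul]
  rw [Matrix.mul_adjugate, Matrix.mul_smul, Matrix.mul_one] at h3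
  have h4 : P - Q = 0 := by
    refine Matrix.ext fun k l => ?_
    have h5 := congrFun (congrFun h3 k) l
    simp only [Matrix.smul_apply, smul_eq_mul, Matrix.zero_apply] at h5
    rw [Matrix.zero_apply]
    rcases mul_eq_zero.mp h5 with h6 | h6
    · exact absurd h6 hdet
    · exact h6
  have := sub_eq_zero.mp h4
  exact this

/-- `Dp` applied to entries of the adjugate of `Λ`. -/
lemma Dp_adj (hAsymm : ∀ a u v, A a u v = A a v u)
    (hBA : ∀ i' j' k' l' : Fin (L + E), ((i' : ℕ) < L ∨ ((j' : ℕ) < L)) →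
      ((k' : ℕ) < L ∨ (l' : ℕ) < L) →
      ∑ a, B i' j' a * A a k' l' = if (i' = k' ∧ j' = l') ∨ (i' = l' ∧ j' = k') then 1 else 0)
    (k l : Fin L) :
    Dp (fun a b => Cc A B b i a (li E j)) ((LamMat A).adjugate k l)
      = MvPolynomial.C (2 * kd i j) * (LamMat A).adjugate k l
        - MvPolynomial.C (kd l i) * (LamMat A).adjugate k j
        - MvPolynomial.C (kd k i) * (LamMat A).adjugate j l := by
  have hdet := Lam_det_ne_zero A B hBA
  have key : (Matrix.of fun k l => Dp (fun a b => Cc A B b i a (li E j))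
        ((LamMat A).adjugate k l)) * LamMat A
      = (Matrix.of fun k l => MvPolynomial.C (2 * kd i j) * (LamMat A).adjugate k l
          - MvPolynomial.C (kd l i) * (LamMat A).adjugate k j
          - MvPolynomial.C (kd k i) * (LamMat A).adjugate j l) * LamMat A := by
    refine Matrix.ext fun k l => ?_
    rw [Matrix.mul_apply, Matrix.mul_apply]
    simp only [Matrix.of_apply]
    have hL1 : ∀ m : Fin L, Dp (fun a b => Cc A B b i a (li E j))
          ((LamMat A).adjugate k m) * LamMat A m l
        = Dp (fun a b => Cc A B b i a (li E j)) ((LamMat A).adjugate k m * LamMat A m l)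
          - (LamMat A).adjugate k m *
              Dp (fun a b => Cc A B b i a (li E j)) (LamMat A m l) := by
      intro m
      rw [Dp_mul]
      ring
    rw [Finset.sum_congr rfl fun m _ => hL1 m, Finset.sum_sub_distrib, ← Dp_sum,
      sum_adj_Lam A k l]
    have hD : Dp (fun a b => Cc A B b i a (li E j))
          (if k = l then (LamMat A).det else 0)
        = if k = l then MvPolynomial.C (2 * kd i j) * (LamMat A).det else 0 := by
      by_cases h : k = l
      · rw [if_pos h, if_pos h, Dp_det_Lam A B i j hAsymm hBA]
      · rw [if_neg h, if_neg h, Dp_zero]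
    have hS : ∑ m, (LamMat A).adjugate k m *
          Dp (fun a b => Cc A B b i a (li E j)) (LamMat A m l)
        = (LamMat A).adjugate k j * LamMat A i l
          + MvPolynomial.C (kd j l) * (if k = i then (LamMat A).det else 0) := by
      have h1 : ∀ m : Fin L, (LamMat A).adjugate k m *
            Dp (fun a b => Cc A B b i a (li E j)) (LamMat A m l)
          = ((LamMat A).adjugate k m * MvPolynomial.C (kd j m)) * LamMat A i l
            + MvPolynomial.C (kd j l) * ((LamMat A).adjugate k m * LamMat A m i) := by
        intro m
        rw [Dp_Lam A B i j hBA m l, Lam_symm A hAsymm i m]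
        ring
      rw [Finset.sum_congr rfl fun m _ => h1 m, Finset.sum_add_distrib, ← Finset.sum_mul,
        sum_mul_kd (fun m => (LamMat A).adjugate k m) j, ← Finset.mul_sum, sum_adj_Lam A k i]
    rw [hD, hS]
    have hR : ∀ m : Fin L, (MvPolynomial.C (2 * kd i j) * (LamMat A).adjugate k m
          - MvPolynomial.C (kd m i) * (LamMat A).adjugate k j
          - MvPolynomial.C (kd k i) * (LamMat A).adjugate j m) * LamMat A m l
        = MvPolynomial.C (2 * kd i j) * ((LamMat A).adjugate k m * LamMat A m l)
          - (MvPolynomial.C (kd i m) * LamMat A m l) * (LamMat A).adjugate k j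
          - MvPolynomial.C (kd k i) * ((LamMat A).adjugate j m * LamMat A m l) := by
      intro m
      rw [kd_symm m i]
      ring
    rw [Finset.sum_congr rfl fun m _ => hR m, Finset.sum_sub_distrib, Finset.sum_sub_distrib,
      ← Finset.mul_sum, sum_adj_Lam A k l, ← Finset.sum_mul,
      sum_kd_mul (fun m => LamMat A m l) i, ← Finset.mul_sum, sum_adj_Lam A j l]
    unfold kd
    split_ifs <;> simp <;> ring
  have heq := mat_cancel A hdet _ _ key
  have := congrFun (congrFun heq k) l
  simpa using this

/-- `Dp` applied to the first part of the second Symanzik polynomial. -/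
lemma Dp_F0 (hAsymm : ∀ a u v, A a u v = A a v u)
    (hBA : ∀ i' j' k' l' : Fin (L + E), ((i' : ℕ) < L ∨ ((j' : ℕ) < L)) →
      ((k' : ℕ) < L ∨ (l' : ℕ) < L) →
      ∑ a, B i' j' a * A a k' l' = if (i' = k' ∧ j' = l') ∨ (i' = l' ∧ j' = k') then 1 else 0)
    (g : Fin E → Fin E → ℂ) :
    Dp (fun a b => Cc A B b i a (li E j))
        (∑ k, ∑ l, (LamMat A).adjugate k l * SMat A g l k)
      = MvPolynomial.C (2 * kd i j) *
          ∑ k, ∑ l, (LamMat A).adjugate k l * SMat A g l k := by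
  have step : ∀ k l : Fin L, Dp (fun a b => Cc A B b i a (li E j))
        ((LamMat A).adjugate k l * SMat A g l k)
      = MvPolynomial.C (2 * kd i j) * ((LamMat A).adjugate k l * SMat A g l k)
        + (-((MvPolynomial.C (kd i l) * SMat A g l k) * (LamMat A).adjugate k j)
            + ((LamMat A).adjugate k l * MvPolynomial.C (kd j l)) * SMat A g i k)
        + (-(MvPolynomial.C (kd i k) * ((LamMat A).adjugate j l * SMat A g l k))
            + MvPolynomial.C (kd j k) * ((LamMat A).adjugate k l * SMat A g l i)) := by
    intro k l
    rw [Dp_mul, Dp_adj A B i j hAsymm hBA k l, Dp_S A B i j hBA g l k,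
      kd_symm l i, kd_symm k i]
    ring
  rw [Dp_sum]
  simp only [Dp_sum]
  rw [Finset.sum_congr rfl fun k _ => Finset.sum_congr rfl fun l _ => step k l]
  simp only [Finset.sum_add_distrib]
  have h24 : ((∑ x : Fin L, ∑ y : Fin L,
        -(MvPolynomial.C (kd i y) * SMat A g y x * (LamMat A).adjugate x j))
      + ∑ x : Fin L, ∑ y : Fin L,
        (LamMat A).adjugate x y * MvPolynomial.C (kd j y) * SMat A g i x) = 0 := by
    rw [← Finset.sum_add_distrib]
    refine Finset.sum_eq_zero fun x _ => ?_
    rw [Finset.sum_neg_distrib]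
    have e1 : ∑ y : Fin L, MvPolynomial.C (kd i y) * SMat A g y x * (LamMat A).adjugate x j
        = (∑ y : Fin L, MvPolynomial.C (kd i y) * SMat A g y x) * (LamMat A).adjugate x j := by
      rw [Finset.sum_mul]
    rw [e1, sum_kd_mul (fun y => SMat A g y x) i]
    have e2 : ∑ y : Fin L, (LamMat A).adjugate x y * MvPolynomial.C (kd j y) * SMat A g i x
        = (∑ y : Fin L, (LamMat A).adjugate x y * MvPolynomial.C (kd j y)) * SMat A g i x := by
      rw [Finset.sum_mul]
    rw [e2, sum_mul_kd (fun y => (LamMat A).adjugate x y) j]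
    ring
  have h35 : ((∑ x : Fin L, ∑ y : Fin L,
        -(MvPolynomial.C (kd i x) * ((LamMat A).adjugate j y * SMat A g y x)))
      + ∑ x : Fin L, ∑ y : Fin L,
        MvPolynomial.C (kd j x) * ((LamMat A).adjugate x y * SMat A g y i)) = 0 := by
    have e1 : ∑ x : Fin L, ∑ y : Fin L,
          -(MvPolynomial.C (kd i x) * ((LamMat A).adjugate j y * SMat A g y x))
        = -∑ y : Fin L, (LamMat A).adjugate j y * SMat A g y i := by
      rw [Finset.sum_congr rfl fun x (_ : x ∈ Finset.univ) => Finset.sum_neg_distrib _,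
        Finset.sum_neg_distrib]
      congr 1
      have : ∀ x : Fin L, ∑ y : Fin L,
            MvPolynomial.C (kd i x) * ((LamMat A).adjugate j y * SMat A g y x)
          = MvPolynomial.C (kd i x) * ∑ y : Fin L, (LamMat A).adjugate j y * SMat A g y x := by
        intro x
        rw [Finset.mul_sum]
      rw [Finset.sum_congr rfl fun x _ => this x,
        sum_kd_mul (fun x => ∑ y : Fin L, (LamMat A).adjugate j y * SMat A g y x) i]
    have e2 : ∑ x : Fin L, ∑ y : Fin L,
          MvPolynomial.C (kd j x) * ((LamMat A).adjugate x y * SMat A g y i)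
        = ∑ y : Fin L, (LamMat A).adjugate j y * SMat A g y i := by
      have : ∀ x : Fin L, ∑ y : Fin L,
            MvPolynomial.C (kd j x) * ((LamMat A).adjugate x y * SMat A g y i)
          = MvPolynomial.C (kd j x) * ∑ y : Fin L, (LamMat A).adjugate x y * SMat A g y i := by
        intro x
        rw [Finset.mul_sum]
      rw [Finset.sum_congr rfl fun x _ => this x,
        sum_kd_mul (fun x => ∑ y : Fin L, (LamMat A).adjugate x y * SMat A g y i) j]
    rw [e1, e2]
    ring
  rw [h24, h35, add_zero, add_zero]
  simp only [← Finset.mul_sum]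


lemma pderiv_J (lam : Fin n → ℂ) (b : Fin n) :
    MvPolynomial.pderiv b (Jpoly lam) = MvPolynomial.C (lam b) := by
  rw [Jpoly, map_sum]
  have : ∀ a : Fin n, MvPolynomial.pderiv b (MvPolynomial.C (lam a) * MvPolynomial.X a)
      = if a = b then MvPolynomial.C (lam a) else 0 := by
    intro a
    rw [pderiv_C_mul, pderiv_X, Pi.single_apply]
    split_ifs with h
    · subst h; simp
    · simp
  rw [Finset.sum_congr rfl fun a _ => this a,
    Finset.sum_ite_eq' Finset.univ b (fun a => MvPolynomial.C (lam a))]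
  simp




end IBP

/-- Lemma A.2 / Corollary 2.16, case `j ≤ L`: the momentum-space IBP operators are
parametric annihilators, in the form of the polynomial identity
`Σ_{a,b} C^{bi}_{aj} x_a (∂_b 𝒢 − λ_b·𝒰) = 2δ_{ij}·𝒢`. -/
theorem stmt_10 {L E n : ℕ} (hL : 1 ≤ L)
    (A : Fin n → Fin (L + E) → Fin (L + E) → ℂ)
    (B : Fin (L + E) → Fin (L + E) → Fin n → ℂ)
    (g : Fin E → Fin E → ℂ) (lam : Fin n → ℂ)
    (hAsymm : ∀ a i j, A a i j = A a j i)
    (hBsymm : ∀ i j b, B i j b = B j i b)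
    (hgsymm : ∀ r s, g r s = g s r)
    (hn : n = L * (L + 1) / 2 + L * E)
    (hBA : ∀ i j k l : Fin (L + E), ((i : ℕ) < L ∨ (j : ℕ) < L) →
      ((k : ℕ) < L ∨ (l : ℕ) < L) →
      ∑ a, B i j a * A a k l = if (i = k ∧ j = l) ∨ (i = l ∧ j = k) then 1 else 0)
    (hAB : ∀ a b : Fin n,
      (∑ i ∈ univ.filter (fun i : Fin (L + E) => (i : ℕ) < L),
        ∑ j ∈ univ.filter (fun j : Fin (L + E) => i ≤ j), A a i j * B i j b)
        = if a = b then 1 else 0)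
    (i j : Fin L) :
    ∑ a, ∑ b, MvPolynomial.C (Cc A B b i a (li E j)) * MvPolynomial.X a *
        (MvPolynomial.pderiv b (Gpoly A g lam) - MvPolynomial.C (lam b) * (LamMat A).det)
      = MvPolynomial.C (2 * kd i j) * Gpoly A g lam := by
  classical
  have hG : ∀ b : Fin n, MvPolynomial.pderiv b (Gpoly A g lam)
        - MvPolynomial.C (lam b) * (LamMat A).det
      = MvPolynomial.pderiv b (LamMat A).det
        + MvPolynomial.pderiv b (∑ k, ∑ l, (LamMat A).adjugate k l * SMat A g l k)
        + MvPolynomial.pderiv b (LamMat A).det * Jpoly lam := by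
    intro b
    rw [Gpoly, Fpoly, map_add, map_add, MvPolynomial.pderiv_mul, IBP.pderiv_J]
    ring
  rw [Finset.sum_congr rfl fun a (_ : a ∈ Finset.univ) => Finset.sum_congr rfl
    fun b (_ : b ∈ Finset.univ) => by rw [hG b]]
  have split : ∀ (a b : Fin n),
      MvPolynomial.C (Cc A B b i a (li E j)) * MvPolynomial.X a *
        (MvPolynomial.pderiv b (LamMat A).det
          + MvPolynomial.pderiv b (∑ k, ∑ l, (LamMat A).adjugate k l * SMat A g l k)
          + MvPolynomial.pderiv b (LamMat A).det * Jpoly lam)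
      = MvPolynomial.C (Cc A B b i a (li E j)) * MvPolynomial.X a *
          MvPolynomial.pderiv b (LamMat A).det
        + MvPolynomial.C (Cc A B b i a (li E j)) * MvPolynomial.X a *
          MvPolynomial.pderiv b (∑ k, ∑ l, (LamMat A).adjugate k l * SMat A g l k)
        + (MvPolynomial.C (Cc A B b i a (li E j)) * MvPolynomial.X a *
            MvPolynomial.pderiv b (LamMat A).det) * Jpoly lam := by
    intro a b
    ring
  rw [Finset.sum_congr rfl fun a (_ : a ∈ Finset.univ) => Finset.sum_congr rfl
    fun b (_ : b ∈ Finset.univ) => split a b]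
  simp only [Finset.sum_add_distrib]
  rw [Finset.sum_congr rfl fun a (_ : a ∈ Finset.univ) => (Finset.sum_mul ..).symm]
  rw [← Finset.sum_mul]
  rw [← IBP.Dp_def, ← IBP.Dp_def, IBP.Dp_det_Lam A B i j hAsymm hBA,
    IBP.Dp_F0 A B i j hAsymm hBA g, Gpoly, Fpoly]
  ring


end
end

section
/- (Commutator identity eq. (2.41) from the proof of Proposition 2.28, realized in the Weyl representation.) With the data below (A invertible, g symmetric invertible): for all 1 ≤ i, j, k, l ≤ L, the ℂ-linear endomorphisms of the polynomial ring ℂ[x_1,…,x_N] satisfy the commutator identity [Q(−∂)_{ij}, mul(Λ_{kl}(x))] = ((δ_{ik}·δ_{jl} + δ_{il}·δ_{jk})/2)·id, where Q(−∂)_{ij} is the constant-coefficient differential operator obtained from the polynomial Q(y)_{ij} by substituting y_a ↦ −∂_a. -/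
open Finset

noncomputable section

/-- The substitution `y_a − λ_a ↦ −∂_a − λ_a·id`, as an endomorphism of the
polynomial ring. -/
def opY {n : ℕ} (lam : Fin n → ℂ) (a : Fin n) :
    Module.End ℂ (MvPolynomial (Fin n) ℂ) :=
  -(MvPolynomial.pderiv a).toLinearMap - lam a • 1

/-- Multiplication by a polynomial, as an endomorphism of the polynomial ring. -/
def mulOp {n : ℕ} (p : MvPolynomial (Fin n) ℂ) :
    Module.End ℂ (MvPolynomial (Fin n) ℂ) :=
  LinearMap.mulLeft ℂ p

/-- The operator `Q(−∂)_{ij}` obtained from the polynomial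
`Q(y)_{ij} = Σ_a A^a_{{i,j}}(y_a−λ_a) − Σ_{a,b}Σ_{r,s>L} A^a_{{i,r}}(y_a−λ_a)(g⁻¹)_{rs}A^b_{{j,s}}(y_b−λ_b)`
by substituting `y_a ↦ −∂_a`. -/
def Qop {L E n : ℕ} (B : Fin (L + E) → Fin (L + E) → Fin n → ℂ)
    (ginv : Fin E → Fin E → ℂ) (lam : Fin n → ℂ) (i j : Fin L) :
    Module.End ℂ (MvPolynomial (Fin n) ℂ) :=
  (∑ a, B (li E i) (li E j) a • opY lam a)
    - ∑ a, ∑ b, ∑ r, ∑ s,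
        (B (li E i) (xi L r) a * ginv r s * B (li E j) (xi L s) b) •
          (opY lam a * opY lam b)

-- bracket with a fixed M, as a linear map
def brM {n : ℕ} (M : Module.End ℂ (MvPolynomial (Fin n) ℂ)) :
    Module.End ℂ (MvPolynomial (Fin n) ℂ) →ₗ[ℂ] Module.End ℂ (MvPolynomial (Fin n) ℂ) :=
  LinearMap.mulRight ℂ M - LinearMap.mulLeft ℂ M

lemma brM_apply {n : ℕ} (M X : Module.End ℂ (MvPolynomial (Fin n) ℂ)) :
    brM M X = X * M - M * X := rfl

lemma mulOp_C {n : ℕ} (r : ℂ) :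
    mulOp (MvPolynomial.C r : MvPolynomial (Fin n) ℂ) = r • 1 := by
  refine LinearMap.ext fun q => ?_
  simp [mulOp, MvPolynomial.smul_eq_C_mul]

lemma brM_opY {n : ℕ} (lam : Fin n → ℂ) (a : Fin n) (P : MvPolynomial (Fin n) ℂ) :
    brM (mulOp P) (opY lam a) = mulOp (-(MvPolynomial.pderiv a P)) := by
  refine LinearMap.ext fun q => ?_
  simp only [brM_apply, opY, mulOp, LinearMap.sub_apply, Module.End.mul_apply,
    LinearMap.neg_apply, LinearMap.smul_apply, Module.End.one_apply,
    AlgHom.toLinearMap_apply, LinearMap.mulLeft_apply, Derivation.coeFn_coe, MvPolynomial.pderiv_mul, map_neg, MvPolynomial.smul_eq_C_mul]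
  ring

lemma pderiv_Lam {L E n : ℕ} (A : Fin n → Fin (L + E) → Fin (L + E) → ℂ)
    (k l : Fin L) (a : Fin n) :
    MvPolynomial.pderiv a (LamMat A k l)
      = MvPolynomial.C (-(1 + kd k l) / 2 * A a (li E k) (li E l)) := by
  unfold LamMat
  rw [MvPolynomial.pderiv_C_mul, map_sum]
  have : ∀ b : Fin n, MvPolynomial.pderiv a
      (MvPolynomial.C (A b (li E k) (li E l)) * MvPolynomial.X b : MvPolynomial (Fin n) ℂ)
      = if b = a then MvPolynomial.C (A b (li E k) (li E l)) else 0 := by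
    intro b
    rw [MvPolynomial.pderiv_C_mul, MvPolynomial.pderiv_X, Pi.single_apply]
    split <;> simp
  rw [Finset.sum_congr rfl (fun b _ => this b), Finset.sum_ite_eq' univ a, if_pos (mem_univ a)]
  rw [← MvPolynomial.C_mul]

-- the scalar s a
lemma brM_opY_Lam {L E n : ℕ} (A : Fin n → Fin (L + E) → Fin (L + E) → ℂ)
    (lam : Fin n → ℂ) (k l : Fin L) (a : Fin n) :
    brM (mulOp (LamMat A k l)) (opY lam a)
      = ((1 + kd k l) / 2 * A a (li E k) (li E l)) • 1 := by
  rw [brM_opY, pderiv_Lam, ← mulOp_C]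
  congr 1
  rw [← map_neg]
  ring_nf

lemma brM_opY_mul {L E n : ℕ} (A : Fin n → Fin (L + E) → Fin (L + E) → ℂ)
    (lam : Fin n → ℂ) (k l : Fin L) (a b : Fin n) :
    brM (mulOp (LamMat A k l)) (opY lam a * opY lam b)
      = ((1 + kd k l) / 2 * A b (li E k) (li E l)) • opY lam a
        + ((1 + kd k l) / 2 * A a (li E k) (li E l)) • opY lam b := by
  set M := mulOp (LamMat A k l)
  set sa := (1 + kd k l) / 2 * A a (li E k) (li E l)
  set sb := (1 + kd k l) / 2 * A b (li E k) (li E l)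
  have ha : opY lam a * M = M * opY lam a + sa • 1 := by
    have := brM_opY_Lam A lam k l a
    rw [brM_apply] at this
    rw [← this]; abel
  have hb : opY lam b * M = M * opY lam b + sb • 1 := by
    have := brM_opY_Lam A lam k l b
    rw [brM_apply] at this
    rw [← this]; abel
  rw [brM_apply, mul_assoc, hb, mul_add, ← mul_assoc, ha, add_mul,
    mul_smul_comm, mul_one, smul_mul_assoc, one_mul, mul_assoc]
  abel

end

lemma kd_half {L : ℕ} (i j k l : Fin L) :
    (1 + kd k l) / 2 * (if (i = k ∧ j = l) ∨ (i = l ∧ j = k) then (1:ℂ) else 0)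
      = (kd i k * kd j l + kd i l * kd j k) / 2 := by
  unfold kd
  by_cases h1 : i = k <;> by_cases h2 : j = l <;> by_cases h3 : i = l <;>
    by_cases h4 : j = k <;> simp only [h1, h2, h3, h4, if_true, if_false, if_pos, if_neg,
      and_self, and_true, true_and, or_true, true_or, not_true, not_false_iff] <;>
    subst_vars <;> simp_all <;> ring


/-- Commutator identity (2.41) realized in the Weyl representation:
`[Q(−∂)_{ij}, mul(Λ_{kl})] = ((δ_{ik}δ_{jl} + δ_{il}δ_{jk})/2)·id`. -/
theorem stmt_12 {L E n : ℕ} (hL : 1 ≤ L) (hE : 1 ≤ E)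
    (A : Fin n → Fin (L + E) → Fin (L + E) → ℂ)
    (B : Fin (L + E) → Fin (L + E) → Fin n → ℂ)
    (g ginv : Fin E → Fin E → ℂ) (lam : Fin n → ℂ)
    (hAsymm : ∀ a i j, A a i j = A a j i)
    (hBsymm : ∀ i j b, B i j b = B j i b)
    (hgsymm : ∀ r s, g r s = g s r)
    (hginv : ∀ r s, ∑ t, g r t * ginv t s = if r = s then 1 else 0)
    (hinvg : ∀ r s, ∑ t, ginv r t * g t s = if r = s then 1 else 0)
    (hn : n = L * (L + 1) / 2 + L * E)
    (hBA : ∀ i j k l : Fin (L + E), ((i : ℕ) < L ∨ (j : ℕ) < L) →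
      ((k : ℕ) < L ∨ (l : ℕ) < L) →
      ∑ a, B i j a * A a k l = if (i = k ∧ j = l) ∨ (i = l ∧ j = k) then 1 else 0)
    (hAB : ∀ a b : Fin n,
      (∑ i ∈ univ.filter (fun i : Fin (L + E) => (i : ℕ) < L),
        ∑ j ∈ univ.filter (fun j : Fin (L + E) => i ≤ j), A a i j * B i j b)
        = if a = b then 1 else 0)
    (i j k l : Fin L) :
    Qop B ginv lam i j * mulOp (LamMat A k l) - mulOp (LamMat A k l) * Qop B ginv lam i j
      = ((kd i k * kd j l + kd i l * kd j k) / 2) •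
          (1 : Module.End ℂ (MvPolynomial (Fin n) ℂ)) := by
  set M := mulOp (LamMat A k l) with hM
  set s : Fin n → ℂ := fun a => (1 + kd k l) / 2 * A a (li E k) (li E l) with hs
  have hzero : ∀ (p : Fin L) (r : Fin E), (∑ a, B (li E p) (xi L r) a * s a) = 0 := by
    intro p r
    have h := hBA (li E p) (xi L r) (li E k) (li E l) (Or.inl (by simp)) (Or.inl (by simp))
    have e : ∑ a, B (li E p) (xi L r) a * s a
        = (1 + kd k l) / 2 * ∑ a, B (li E p) (xi L r) a * A a (li E k) (li E l) := by
      rw [Finset.mul_sum]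
      exact Finset.sum_congr rfl fun a _ => by simp only [hs]; ring
    rw [e, h, if_neg, mul_zero]
    have hk := k.isLt
    have hl := l.isLt
    rintro (⟨h1, h2⟩ | ⟨h1, h2⟩) <;>
      · have := congrArg Fin.val h2
        simp at this
        omega
  have hfirst : ∑ a, B (li E i) (li E j) a * s a
      = (kd i k * kd j l + kd i l * kd j k) / 2 := by
    have h := hBA (li E i) (li E j) (li E k) (li E l) (Or.inl (by simp)) (Or.inl (by simp))
    have e : ∑ a, B (li E i) (li E j) a * s a
        = (1 + kd k l) / 2 * ∑ a, B (li E i) (li E j) a * A a (li E k) (li E l) := by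
      rw [Finset.mul_sum]
      exact Finset.sum_congr rfl fun a _ => by simp only [hs]; ring
    have hcond : ((li E i = li E k ∧ li E j = li E l) ∨ (li E i = li E l ∧ li E j = li E k))
        ↔ ((i = k ∧ j = l) ∨ (i = l ∧ j = k)) := by
      simp [Fin.ext_iff]
    rw [e, h, if_congr hcond rfl rfl, kd_half]
  rw [← brM_apply, Qop, map_sub, map_sum, map_sum]
  have h1 : ∑ a, brM M (B (li E i) (li E j) a • opY lam a)
      = ((kd i k * kd j l + kd i l * kd j k) / 2) • 1 := by
    have : ∀ a : Fin n, brM M (B (li E i) (li E j) a • opY lam a)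
        = (B (li E i) (li E j) a * s a) • (1 : Module.End ℂ (MvPolynomial (Fin n) ℂ)) := by
      intro a
      rw [map_smul, hM, brM_opY_Lam, smul_smul]
    rw [Finset.sum_congr rfl fun a _ => this a, ← Finset.sum_smul, hfirst]
  rw [h1]
  have h2 : ∑ a, brM M (∑ b, ∑ r, ∑ t,
      (B (li E i) (xi L r) a * ginv r t * B (li E j) (xi L t) b) •
        (opY lam a * opY lam b)) = 0 := by
    have expand : ∀ a : Fin n, brM M (∑ b, ∑ r, ∑ t,
        (B (li E i) (xi L r) a * ginv r t * B (li E j) (xi L t) b) •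
          (opY lam a * opY lam b))
        = ∑ b, ∑ r, ∑ t, ((B (li E i) (xi L r) a * ginv r t * B (li E j) (xi L t) b * s b) • opY lam a
            + (B (li E i) (xi L r) a * ginv r t * B (li E j) (xi L t) b * s a) • opY lam b) := by
      intro a
      rw [map_sum]
      refine Finset.sum_congr rfl fun b _ => ?_
      rw [map_sum]
      refine Finset.sum_congr rfl fun r _ => ?_
      rw [map_sum]
      refine Finset.sum_congr rfl fun t _ => ?_
      rw [map_smul, hM, brM_opY_mul, smul_add, smul_smul, smul_smul]
    rw [Finset.sum_congr rfl fun a _ => expand a]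
    simp only [Finset.sum_add_distrib]
    have partA : ∑ a, ∑ b, ∑ r, ∑ t,
        (B (li E i) (xi L r) a * ginv r t * B (li E j) (xi L t) b * s b) • opY lam a = 0 := by
      refine Finset.sum_eq_zero fun a _ => ?_
      simp only [← Finset.sum_smul]
      have : (∑ b, ∑ r, ∑ t,
          B (li E i) (xi L r) a * ginv r t * B (li E j) (xi L t) b * s b) = 0 := by
        rw [Finset.sum_comm]
        refine Finset.sum_eq_zero fun r _ => ?_
        rw [Finset.sum_comm]
        refine Finset.sum_eq_zero fun t _ => ?_
        have e : ∑ b, B (li E i) (xi L r) a * ginv r t * B (li E j) (xi L t) b * s b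
            = (B (li E i) (xi L r) a * ginv r t) * ∑ b, B (li E j) (xi L t) b * s b := by
          rw [Finset.mul_sum]
          exact Finset.sum_congr rfl fun b _ => by ring
        rw [e, hzero j t, mul_zero]
      rw [this, zero_smul]
    have partB : ∑ a, ∑ b, ∑ r, ∑ t,
        (B (li E i) (xi L r) a * ginv r t * B (li E j) (xi L t) b * s a) • opY lam b = 0 := by
      rw [Finset.sum_comm]
      refine Finset.sum_eq_zero fun b _ => ?_
      simp only [← Finset.sum_smul]
      have : (∑ a, ∑ r, ∑ t,
          B (li E i) (xi L r) a * ginv r t * B (li E j) (xi L t) b * s a) = 0 := by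
        rw [Finset.sum_comm]
        refine Finset.sum_eq_zero fun r _ => ?_
        rw [Finset.sum_comm]
        refine Finset.sum_eq_zero fun t _ => ?_
        have e : ∑ a, B (li E i) (xi L r) a * ginv r t * B (li E j) (xi L t) b * s a
            = (ginv r t * B (li E j) (xi L t) b) * ∑ a, B (li E i) (xi L r) a * s a := by
          rw [Finset.mul_sum]
          exact Finset.sum_congr rfl fun a _ => by ring
        rw [e, hzero i r, mul_zero]
      rw [this, zero_smul]
    rw [partA, partB, add_zero]
  rw [h2, sub_zero]
end

section
/- (One-loop bubble integral, eqs. (2.12)/(2.14).) For all real a, b, c, p with a > 0, b > 0, p > 0, a < c, b < c and a + b > c, one has ∫_0^∞ ∫_0^∞ x^{a−1} · y^{b−1} · (x + y + p·x·y)^{−c} dx dy = p^{c−a−b} · Γ(c−a) · Γ(c−b) · Γ(a+b−c) / Γ(c). (With a = ν_1, b = ν_2, c = d/2 and p = −p² this is the evaluation of the Lee–Pomeransky parametric representation of the one-loop massless bubble in terms of Gamma functions.) -/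
open MeasureTheory Set

lemma realBeta_integrable {s t : ℝ} (hs : 0 < s) (ht : 0 < t) :
    IntegrableOn (fun x : ℝ => x ^ (s - 1) * (1 - x) ^ (t - 1)) (Ioo 0 1) := by
  have hC := Complex.betaIntegral_convergent (u := (s : ℂ)) (v := (t : ℂ)) (by simpa) (by simpa)
  have h1 : IntegrableOn (fun x : ℝ =>
      ‖(x : ℂ) ^ ((s : ℂ) - 1) * (1 - (x : ℂ)) ^ ((t : ℂ) - 1)‖) (Ioo 0 1) := by
    have := hC.1.norm
    rw [intervalIntegrable_iff_integrableOn_Ioo_of_le (by norm_num)] at hC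
    exact hC.norm
  refine h1.congr_fun (fun x hx => ?_) measurableSet_Ioo
  obtain ⟨hx0, hx1⟩ := hx
  beta_reduce
  rw [norm_mul]
  rw [show ((1:ℂ) - (x:ℂ)) = ((1 - x : ℝ) : ℂ) by push_cast; ring,
    show ((t:ℂ) - 1) = ((t - 1 : ℝ) : ℂ) by push_cast; ring,
    show ((s:ℂ) - 1) = ((s - 1 : ℝ) : ℂ) by push_cast; ring]
  rw [Complex.norm_cpow_eq_rpow_re_of_pos hx0, Complex.norm_cpow_eq_rpow_re_of_pos (by linarith)]
  norm_num

lemma realBeta_value {s t : ℝ} (hs : 0 < s) (ht : 0 < t) :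
    ∫ x in Ioo (0:ℝ) 1, x ^ (s - 1) * (1 - x) ^ (t - 1)
      = Real.Gamma s * Real.Gamma t / Real.Gamma (s + t) := by
  have hG : Complex.Gamma (s : ℂ) * Complex.Gamma (t : ℂ)
      = Complex.Gamma ((s : ℂ) + t) * Complex.betaIntegral s t :=
    Complex.Gamma_mul_Gamma_eq_betaIntegral (by simpa) (by simpa)
  have hst : Real.Gamma (s + t) ≠ 0 := (Real.Gamma_pos_of_pos (by linarith)).ne'
  have hB : Complex.betaIntegral s t
      = ((∫ x in Ioo (0:ℝ) 1, x ^ (s - 1) * (1 - x) ^ (t - 1) : ℝ) : ℂ) := by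
    have h1 : (∫ x in Ioo (0:ℝ) 1, x ^ (s - 1) * (1 - x) ^ (t - 1) : ℝ)
        = ∫ x in (0:ℝ)..1, x ^ (s - 1) * (1 - x) ^ (t - 1) := by
      rw [intervalIntegral.integral_of_le (by norm_num : (0:ℝ) ≤ 1),
        MeasureTheory.integral_Ioc_eq_integral_Ioo]
    rw [h1, Complex.betaIntegral, ← intervalIntegral.integral_ofReal]
    refine intervalIntegral.integral_congr fun x hx => ?_
    rw [Set.uIcc_of_le (by norm_num : (0:ℝ) ≤ 1)] at hx
    obtain ⟨hx0, hx1⟩ := hx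
    push_cast
    rw [Complex.ofReal_cpow hx0, Complex.ofReal_cpow (by linarith : (0:ℝ) ≤ 1 - x)]
    push_cast
    ring
  rw [hB] at hG
  have : ((Real.Gamma s * Real.Gamma t : ℝ) : ℂ)
      = ((Real.Gamma (s + t) * ∫ x in Ioo (0:ℝ) 1, x ^ (s - 1) * (1 - x) ^ (t - 1) : ℝ) : ℂ) := by
    push_cast
    rw [← Complex.Gamma_ofReal, ← Complex.Gamma_ofReal]
    push_cast at hG ⊢
    rw [hG]
    congr 1
    rw [← Complex.ofReal_add, Complex.Gamma_ofReal]
  have h2 := Complex.ofReal_injective this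
  field_simp
  linarith [h2]

lemma betaIoi_aux {s t : ℝ} (hs : 0 < s) (ht : 0 < t) :
    IntegrableOn (fun x : ℝ => x ^ (s - 1) * (1 + x) ^ (-(s + t))) (Ioi 0) ∧
    ∫ x in Ioi (0:ℝ), x ^ (s - 1) * (1 + x) ^ (-(s + t))
      = Real.Gamma s * Real.Gamma t / Real.Gamma (s + t) := by
  set f : ℝ → ℝ := fun x => x / (1 + x) with hf
  have hderiv : ∀ x ∈ Ioi (0:ℝ), HasDerivWithinAt f (((1 + x) ^ 2)⁻¹) (Ioi 0) x := by
    intro x hx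
    have h1x : (1 + x) ≠ 0 := by simp at hx; positivity
    have hb : HasDerivAt (fun y : ℝ => 1 + y) 1 x := by
      exact (hasDerivAt_id' x).const_add 1
    have : HasDerivAt f ((1 * (1 + x) - x * 1) / (1 + x) ^ 2) x :=
      (hasDerivAt_id x).div hb h1x
    have h2 : (1 * (1 + x) - x * 1) / (1 + x) ^ 2 = ((1 + x) ^ 2)⁻¹ := by field_simp; ring
    exact (h2 ▸ this).hasDerivWithinAt
  have hinj : Set.InjOn f (Ioi 0) := by
    intro x hx y hy hxy
    simp only [Set.mem_Ioi] at hx hy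
    have hx1 : (1 + x) ≠ 0 := by positivity
    have hy1 : (1 + y) ≠ 0 := by positivity
    simp only [hf] at hxy
    field_simp at hxy
    nlinarith
  have himg : f '' Ioi 0 = Ioo 0 1 := by
    ext u
    simp only [Set.mem_image, Set.mem_Ioi, Set.mem_Ioo]
    constructor
    · rintro ⟨x, hx, rfl⟩
      have h1x : (0:ℝ) < 1 + x := by linarith
      constructor
      · positivity
      · rw [div_lt_one h1x]; linarith
    · rintro ⟨hu0, hu1⟩
      have h1u : (0:ℝ) < 1 - u := by linarith
      refine ⟨u / (1 - u), div_pos hu0 h1u, ?_⟩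
      have h1u' : (1:ℝ) - u ≠ 0 := ne_of_gt h1u
      simp only [hf]
      field_simp
      ring
  have hpt : ∀ x ∈ Ioi (0:ℝ),
      |((1 + x) ^ 2)⁻¹| • (f x ^ (s - 1) * (1 - f x) ^ (t - 1))
        = x ^ (s - 1) * (1 + x) ^ (-(s + t)) := by
    intro x hx
    simp only [Set.mem_Ioi] at hx
    have h1x : (0:ℝ) < 1 + x := by linarith
    have h1 : 1 - f x = (1 + x)⁻¹ := by simp only [hf]; field_simp; ring
    have h2 : f x ^ (s - 1) = x ^ (s - 1) * (1 + x) ^ (-(s - 1)) := by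
      rw [hf, Real.div_rpow hx.le h1x.le, Real.rpow_neg h1x.le, div_eq_mul_inv]
    have h3 : (1 - f x) ^ (t - 1) = (1 + x) ^ (-(t - 1)) := by
      rw [h1, Real.inv_rpow h1x.le, ← Real.rpow_neg h1x.le]
    have h4 : |((1 + x) ^ 2)⁻¹| = (1 + x) ^ (-(2:ℝ)) := by
      rw [abs_of_pos (by positivity), ← Real.rpow_natCast (1 + x) 2,
        ← Real.rpow_neg h1x.le]
      norm_num
    have h5 : (1 + x) ^ (-(2:ℝ)) * ((1 + x) ^ (-(s-1)) * (1 + x) ^ (-(t-1)))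
        = (1 + x) ^ (-(s + t)) := by
      rw [← Real.rpow_add h1x, ← Real.rpow_add h1x]
      congr 1
      ring
    rw [smul_eq_mul, h2, h3, h4, ← h5]
    ring
  set g : ℝ → ℝ := fun u => u ^ (s - 1) * (1 - u) ^ (t - 1) with hg
  have hkey := integral_image_eq_integral_abs_deriv_smul measurableSet_Ioi hderiv hinj g
  have hikey := integrableOn_image_iff_integrableOn_abs_deriv_smul measurableSet_Ioi hderiv hinj g
  rw [himg] at hkey hikey
  constructor
  · rw [← integrableOn_congr_fun hpt measurableSet_Ioi]
    exact hikey.mp (realBeta_integrable hs ht)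
  · rw [← setIntegral_congr_fun measurableSet_Ioi hpt, ← hkey, realBeta_value hs ht]

lemma betaIoi_scaled {s t k : ℝ} (hs : 0 < s) (ht : 0 < t) (hk : 0 < k) :
    IntegrableOn (fun x : ℝ => x ^ (s - 1) * (1 + k * x) ^ (-(s + t))) (Ioi 0) ∧
    ∫ x in Ioi (0:ℝ), x ^ (s - 1) * (1 + k * x) ^ (-(s + t))
      = k ^ (-s) * (Real.Gamma s * Real.Gamma t / Real.Gamma (s + t)) := by
  obtain ⟨hBi, hBv⟩ := betaIoi_aux hs ht
  set h : ℝ → ℝ := fun x => x ^ (s - 1) * (1 + x) ^ (-(s + t)) with hh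
  have hks : k ^ (s - 1) ≠ 0 := (Real.rpow_pos_of_pos hk _).ne'
  have hcong : ∀ x ∈ Ioi (0:ℝ),
      h (k * x) = k ^ (s - 1) * (x ^ (s - 1) * (1 + k * x) ^ (-(s + t))) := by
    intro x hx
    simp only [Set.mem_Ioi] at hx
    simp only [hh]
    rw [Real.mul_rpow hk.le hx.le]
    ring
  have hint : IntegrableOn (fun x => h (k * x)) (Ioi 0) := by
    refine (integrableOn_Ioi_comp_mul_left_iff h 0 hk).mpr ?_
    simpa using hBi
  have hint2 : IntegrableOn
      (fun x : ℝ => k ^ (s - 1) * (x ^ (s - 1) * (1 + k * x) ^ (-(s + t)))) (Ioi 0) :=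
    (integrableOn_congr_fun hcong measurableSet_Ioi).mp hint
  have hint3 : IntegrableOn (fun x : ℝ => x ^ (s - 1) * (1 + k * x) ^ (-(s + t))) (Ioi 0) :=
    (integrable_const_mul_iff (isUnit_iff_ne_zero.mpr hks) _).mp hint2
  refine ⟨hint3, ?_⟩
  have hval : ∫ x in Ioi (0:ℝ), h (k * x)
      = k⁻¹ * (Real.Gamma s * Real.Gamma t / Real.Gamma (s + t)) := by
    rw [integral_comp_mul_left_Ioi h 0 hk]
    simp [hBv, smul_eq_mul]
  rw [setIntegral_congr_fun measurableSet_Ioi hcong, integral_const_mul] at hval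
  have hpow : k ^ (s - 1) * k ^ (-s) = k⁻¹ := by
    rw [← Real.rpow_add hk, show s - 1 + -s = -1 by ring, Real.rpow_neg_one]
  calc ∫ x in Ioi (0:ℝ), x ^ (s - 1) * (1 + k * x) ^ (-(s + t))
      = (k ^ (s-1))⁻¹ * (k ^ (s-1) * ∫ x in Ioi (0:ℝ), x ^ (s - 1) * (1 + k * x) ^ (-(s + t))) := by
        field_simp
    _ = (k ^ (s-1))⁻¹ * (k⁻¹ * (Real.Gamma s * Real.Gamma t / Real.Gamma (s + t))) := by rw [hval]
    _ = k ^ (-s) * (Real.Gamma s * Real.Gamma t / Real.Gamma (s + t)) := by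
        rw [← hpow]
        field_simp

lemma genBeta {s c A B : ℝ} (hs : 0 < s) (hsc : s < c) (hA : 0 < A) (hB : 0 < B) :
    IntegrableOn (fun x : ℝ => x ^ (s - 1) * (A * x + B) ^ (-c)) (Ioi 0) ∧
    ∫ x in Ioi (0:ℝ), x ^ (s - 1) * (A * x + B) ^ (-c)
      = A ^ (-s) * B ^ (s - c) * (Real.Gamma s * Real.Gamma (c - s) / Real.Gamma c) := by
  have ht : 0 < c - s := by linarith
  obtain ⟨hi, hv⟩ := betaIoi_scaled hs ht (div_pos hA hB)
  rw [show s + (c - s) = c by ring] at hi hv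
  have hcong : ∀ x ∈ Ioi (0:ℝ),
      B ^ (-c) * (x ^ (s - 1) * (1 + A / B * x) ^ (-c)) = x ^ (s - 1) * (A * x + B) ^ (-c) := by
    intro x hx
    simp only [Set.mem_Ioi] at hx
    have h1 : A * x + B = B * (1 + A / B * x) := by field_simp; ring
    have h2 : (0:ℝ) < 1 + A / B * x := by positivity
    rw [h1, Real.mul_rpow hB.le h2.le]
    ring
  have hint : IntegrableOn (fun x : ℝ => x ^ (s - 1) * (A * x + B) ^ (-c)) (Ioi 0) :=
    (integrableOn_congr_fun hcong measurableSet_Ioi).mp (hi.const_mul _)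
  refine ⟨hint, ?_⟩
  rw [← setIntegral_congr_fun measurableSet_Ioi hcong, integral_const_mul, hv]
  have h3 : (A / B) ^ (-s) = A ^ (-s) / B ^ (-s) := Real.div_rpow hA.le hB.le _
  have h4 : B ^ (-c) / B ^ (-s) = B ^ (s - c) := by
    rw [← Real.rpow_sub hB]; congr 1; ring
  have hBs : B ^ (-s) ≠ 0 := (Real.rpow_pos_of_pos hB _).ne'
  rw [h3, ← h4]
  field_simp

/-- The one-loop bubble integral (eqs. (2.12)/(2.14)):
`∫_0^∞ ∫_0^∞ x^{a−1} y^{b−1} (x + y + p·x·y)^{−c} dx dy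
  = p^{c−a−b} Γ(c−a) Γ(c−b) Γ(a+b−c) / Γ(c)`. -/
theorem stmt_16 (a b c p : ℝ) (ha : 0 < a) (hb : 0 < b) (hp : 0 < p)
    (hac : a < c) (hbc : b < c) (habc : c < a + b) :
    ∫ z in Set.Ioi (0 : ℝ) ×ˢ Set.Ioi (0 : ℝ),
        z.1 ^ (a - 1) * z.2 ^ (b - 1) * (z.1 + z.2 + p * z.1 * z.2) ^ (-c)
      = p ^ (c - a - b) * Real.Gamma (c - a) * Real.Gamma (c - b) *
          Real.Gamma (a + b - c) / Real.Gamma c := by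

  set f : ℝ × ℝ → ℝ :=
    fun z => z.1 ^ (a - 1) * z.2 ^ (b - 1) * (z.1 + z.2 + p * z.1 * z.2) ^ (-c) with hfdef
  set μ := volume.restrict (Ioi (0:ℝ)) with hμ
  have hprod : volume.restrict (Set.Ioi (0:ℝ) ×ˢ Set.Ioi (0:ℝ)) = μ.prod μ := by
    rw [hμ, Measure.prod_restrict, ← Measure.volume_eq_prod]
  have hcont : ContinuousOn f (Set.Ioi (0:ℝ) ×ˢ Set.Ioi (0:ℝ)) := by
    apply ContinuousOn.mul
    apply ContinuousOn.mul
    · exact continuous_fst.continuousOn.rpow_const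
        (fun z hz => Or.inl (ne_of_gt (Set.mem_prod.mp hz).1))
    · exact continuous_snd.continuousOn.rpow_const
        (fun z hz => Or.inl (ne_of_gt (Set.mem_prod.mp hz).2))
    · refine ContinuousOn.rpow_const ?_ (fun z hz => Or.inl ?_)
      · exact ((continuous_fst.add continuous_snd).add
          ((continuous_const.mul continuous_fst).mul continuous_snd)).continuousOn
      · obtain ⟨h1, h2⟩ := Set.mem_prod.mp hz
        simp only [Set.mem_Ioi] at h1 h2
        positivity
  have hmeas : AEStronglyMeasurable f (μ.prod μ) := by
    rw [← hprod]
    exact hcont.aestronglyMeasurable (measurableSet_Ioi.prod measurableSet_Ioi)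
  -- inner integral facts, for x > 0
  set K : ℝ := Real.Gamma b * Real.Gamma (c - b) / Real.Gamma c with hK
  have hBC : 0 < c - b := by linarith
  have inner : ∀ x : ℝ, 0 < x →
      (Integrable (fun y => f (x, y)) μ ∧
        ∫ y, f (x, y) ∂μ = K * (x ^ (a + b - c - 1) * (1 + p * x) ^ (-b))) := by
    intro x hx
    have hA : (0:ℝ) < 1 + p * x := by positivity
    obtain ⟨hi, hv⟩ := genBeta hb hbc hA hx
    have hcong : ∀ y ∈ Ioi (0:ℝ),
        x ^ (a - 1) * (y ^ (b - 1) * ((1 + p * x) * y + x) ^ (-c)) = f (x, y) := by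
      intro y hy
      simp only [hfdef]
      rw [show (1 + p * x) * y + x = x + y + p * x * y by ring]
      ring
    constructor
    · exact (integrableOn_congr_fun hcong measurableSet_Ioi).mp (hi.const_mul _)
    · rw [hμ, ← setIntegral_congr_fun measurableSet_Ioi hcong, integral_const_mul, hv]
      have h1 : x ^ (a - 1) * x ^ (b - c) = x ^ (a + b - c - 1) := by
        rw [← Real.rpow_add hx]; congr 1; ring
      rw [← h1]
      ring
  -- a.e. nonnegativity: ∫ ‖f(x,y)‖ = ∫ f(x,y) for x > 0
  have hnorm : ∀ x : ℝ, 0 < x → (∫ y, ‖f (x, y)‖ ∂μ) = ∫ y, f (x, y) ∂μ := by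
    intro x hx
    rw [hμ]
    refine setIntegral_congr_fun measurableSet_Ioi (fun y hy => ?_)
    simp only [Set.mem_Ioi] at hy
    have : (0:ℝ) ≤ f (x, y) := by
      simp only [hfdef]
      positivity
    simp [Real.norm_eq_abs, abs_of_nonneg this]
  -- outer integrand
  set s₀ : ℝ := a + b - c with hs₀
  have hs₀pos : 0 < s₀ := by simp only [hs₀]; linarith
  have ht₀pos : 0 < c - a := by linarith
  obtain ⟨houti, houtv⟩ := betaIoi_scaled hs₀pos ht₀pos hp
  rw [show s₀ + (c - a) = b by simp only [hs₀]; ring] at houti houtv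
  have hKnn : 0 ≤ K := by
    have := Real.Gamma_pos_of_pos hb
    have := Real.Gamma_pos_of_pos hBC
    have := Real.Gamma_pos_of_pos (show (0:ℝ) < c by linarith)
    positivity
  -- integrability on the product
  have hintf : Integrable f (μ.prod μ) := by
    rw [integrable_prod_iff hmeas]
    constructor
    · filter_upwards [ae_restrict_mem measurableSet_Ioi] with x hx
      exact (inner x hx).1
    · refine (Integrable.congr ((houti.const_mul K)) ?_)
      rw [hμ]
      filter_upwards [ae_restrict_mem measurableSet_Ioi] with x hx
      rw [← hμ, hnorm x hx, (inner x hx).2]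
  rw [hprod, integral_prod f hintf]
  have : (∫ x, ∫ y, f (x, y) ∂μ ∂μ) = K * (∫ x in Ioi (0:ℝ), x ^ (s₀ - 1) * (1 + p * x) ^ (-b)) := by
    rw [← integral_const_mul, hμ]
    refine setIntegral_congr_fun measurableSet_Ioi (fun x hx => ?_)
    rw [← hμ, (inner x hx).2]
  rw [this, houtv]
  have hGb : Real.Gamma b ≠ 0 := (Real.Gamma_pos_of_pos hb).ne'
  have hGc : Real.Gamma c ≠ 0 := (Real.Gamma_pos_of_pos (by linarith : (0:ℝ) < c)).ne'
  have hpe : p ^ (-s₀) = p ^ (c - a - b) := by congr 1; simp only [hs₀]; ring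
  rw [hpe, hK]
  field_simp
end
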